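/- arXiv:2305.04935 — 17 statements merged into one kernel-verified Lean document; each statement's English description precedes it below -/
import Mathlib

section
/- Let R be an oracle and let a ≤ b ≤ c ≤ d be rationals. If R a c and R b d (i.e. the intervals a:c and b:d are both Yes intervals), then R b c (their intersection b:c is a Yes interval). -/
/-- An oracle is a rule on rational intervals satisfying the five oracle properties. -/
structure IsOracle (R : ℚ → ℚ → Prop) : Prop where
  consistent : ∀ a b c d : ℚ, c ≤ a → a ≤ b → b ≤ d → R a b → R c d
  exists_yes : ∃ a b : ℚ, a ≤ b ∧ R a b
  separating : ∀ a b c : ℚ, a ≤ b → R a b → a < c → c < b →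
    (R c c ∨ ¬ (R a c ↔ R c b))
  rooted : ∀ c d : ℚ, R c c → R d d → c = d
  closed : ∀ c : ℚ, (∀ a b : ℚ, a ≤ b → R a b → a ≤ c ∧ c ≤ b) → R c c

theorem yes_intersection (R : ℚ → ℚ → Prop) (hR : IsOracle R)
    (a b c d : ℚ) (hab : a ≤ b) (hbc : b ≤ c) (hcd : c ≤ d)
    (h1 : R a c) (h2 : R b d) : R b c := by
  by_contra hnbc
  rcases eq_or_lt_of_le hab with rfl | hab'
  · exact hnbc h1
  rcases eq_or_lt_of_le hcd with rfl | hcd'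
  · exact hnbc h2
  rcases eq_or_lt_of_le hbc with rfl | hbc'
  · -- b = c
    have hRad : R a d := hR.consistent a b a d le_rfl hab hcd h1
    rcases hR.separating a d b (le_of_lt (hab'.trans hcd')) hRad hab' hcd' with h | h
    · exact hnbc h
    · exact h (iff_of_true h1 h2)
  · have hRab : R a b := by
      rcases hR.separating a c b (hab.trans hbc) h1 hab' hbc' with h | h
      · exact absurd (hR.consistent b b b c le_rfl le_rfl hbc h) hnbc
      · by_contra hn; exact h (iff_of_false hn hnbc)
    have hRcd : R c d := by
      rcases hR.separating b d c (hbc.trans hcd) h2 hbc' hcd' with h | h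
      · exact absurd (hR.consistent c c b c hbc le_rfl le_rfl h) hnbc
      · by_contra hn; exact h (iff_of_false hnbc hn)
    set e : ℚ := (b + c) / 2 with he
    have hbe : b < e := by rw [he]; linarith
    have hec : e < c := by rw [he]; linarith
    have hRad : R a d := hR.consistent a c a d le_rfl (hab.trans hbc) hcd h1
    rcases hR.separating a d e (le_of_lt (hab'.trans (hbe.trans (hec.trans hcd')))) hRad
        (hab'.trans hbe) (hec.trans hcd') with h | h
    · exact hnbc (hR.consistent e e b c hbe.le le_rfl hec.le h)
    · exact h (iff_of_true (hR.consistent a b a e le_rfl hab hbe.le hRab)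
        (hR.consistent c d e d hec.le hcd le_rfl hRcd))
end

section
/- Let R be an oracle and let a ≤ b ≤ c ≤ d be rationals. If ¬ R a c and ¬ R b d (i.e. the overlapping intervals a:c and b:d are both No intervals), then ¬ R a d (their union a:d is a No interval). -/
theorem no_union (R : ℚ → ℚ → Prop) (hR : IsOracle R)
    (a b c d : ℚ) (hab : a ≤ b) (hbc : b ≤ c) (hcd : c ≤ d)
    (h1 : ¬ R a c) (h2 : ¬ R b d) : ¬ R a d := by
  intro had
  rcases eq_or_lt_of_le hab with rfl | hab'
  · exact h2 had
  rcases eq_or_lt_of_le (hbc.trans hcd) with hbd | hbd'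
  · have : c = d := le_antisymm hcd (hbd ▸ hbc)
    exact h1 (this ▸ had)
  rcases hR.separating a d b (hab.trans (hbc.trans hcd)) had hab' hbd' with hbb | hne
  · exact h2 (hR.consistent b b b d le_rfl le_rfl (hbc.trans hcd) hbb)
  · apply hne
    constructor
    · intro hab2; exact absurd (hR.consistent a b a c le_rfl hab hbc hab2) h1
    · intro hbd2; exact absurd hbd2 h2
end

section
/- Let R be an oracle and let a ≤ b and c ≤ d be rationals with b < c (so the intervals a:b and c:d are disjoint). Then it is not the case that both R a b and R c d hold; that is, two disjoint intervals cannot both be Yes intervals of the same oracle. -/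
theorem disjoint_not_both_yes (R : ℚ → ℚ → Prop) (hR : IsOracle R)
    (a b c d : ℚ) (hab : a ≤ b) (hcd : c ≤ d) (hbc : b < c) :
    ¬ (R a b ∧ R c d) := by
  rintro ⟨h1, h2⟩
  have key : ∀ m : ℚ, b < m → m < c → R m m := by
    intro m hbm hmc
    have ham : a < m := lt_of_le_of_lt hab hbm
    have hmd : m < d := lt_of_lt_of_le hmc hcd
    have had : a ≤ d := le_of_lt (lt_trans ham hmd)
    have hRad : R a d := hR.consistent a b a d le_rfl hab (le_of_lt (lt_of_lt_of_le hbc hcd)) h1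
    have hRam : R a m := hR.consistent a b a m le_rfl hab hbm.le h1
    have hRmd : R m d := hR.consistent c d m d hmc.le hcd le_rfl h2
    rcases hR.separating a d m had hRad ham hmd with h | h
    · exact h
    · exact absurd (iff_of_true hRam hRmd) h
  set m1 := b + (c - b) / 3 with hm1
  set m2 := b + (c - b) * 2 / 3 with hm2
  have h1' : b < m1 := by rw [hm1]; linarith
  have h2' : m1 < c := by rw [hm1]; linarith
  have h3' : b < m2 := by rw [hm2]; linarith
  have h4' : m2 < c := by rw [hm2]; linarith
  have := hR.rooted m1 m2 (key m1 h1' h2') (key m2 h3' h4')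
  rw [hm1, hm2] at this
  linarith
end

section
/- Let R be a neighborly oracle and let a < b be rationals with R a b. Then there exist rationals c, d with a < c ≤ d < b such that R c d; that is, every neighborly Yes interval strictly contains another Yes interval. -/
/-- Two Yes intervals of a neighborly oracle overlap on a nondegenerate interval:
if `x ≤ u` then `u < y`. -/
lemma yes_meet (R : ℚ → ℚ → Prop) (hR : IsOracle R) (hne : ∀ c : ℚ, ¬ R c c)
    {x y u v : ℚ} (hxy : x ≤ y) (huv : u ≤ v) (h1 : R x y) (h2 : R u v)
    (hxu : x ≤ u) : u < y := by
  by_contra hc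
  push_neg at hc  -- y ≤ u
  have hxlty : x < y := lt_of_le_of_ne hxy (by rintro rfl; exact hne x h1)
  have hultv : u < v := lt_of_le_of_ne huv (by rintro rfl; exact hne u h2)
  have hxv : R x v := hR.consistent x y x v le_rfl hxy (hc.trans huv) h1
  have hxu' : R x u := hR.consistent x y x u le_rfl hxy hc h1
  have := hR.separating x v u (le_of_lt (lt_of_lt_of_le hxlty (hc.trans huv))) hxv
    (lt_of_lt_of_le hxlty hc) hultv
  rcases this with h' | h'
  · exact hne u h'
  · exact h' ⟨fun _ => h2, fun _ => hxu'⟩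

/-- Intersection of overlapping Yes intervals is Yes (nested-endpoint form). -/
lemma yes_inter (R : ℚ → ℚ → Prop) (hR : IsOracle R) (hne : ∀ c : ℚ, ¬ R c c)
    {p q p' q' : ℚ} (hpq : p ≤ q) (hpq' : p' ≤ q') (h1 : R p q) (h2 : R p' q')
    (hpp : p ≤ p') (hqq : q ≤ q') : R p' q := by
  have hp'q : p' < q := yes_meet R hR hne hpq hpq' h1 h2 hpp
  rcases eq_or_lt_of_le hpp with rfl | hpp'
  · exact h1
  by_contra hc
  have hsep1 := hR.separating p q p' hpq h1 hpp' hp'q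
  rcases hsep1 with h' | h'
  · exact hne p' h'
  have hpp'' : R p p' := by
    by_contra hx
    exact h' ⟨fun hy => (hx hy).elim, fun hy => (hc hy).elim⟩
  rcases eq_or_lt_of_le hqq with rfl | hqq'
  · exact hc h2
  have hsep2 := hR.separating p' q' q hpq' h2 hp'q hqq'
  rcases hsep2 with h'' | h''
  · exact hne q h''
  have hqq'' : R q q' := by tauto
  have := yes_meet R hR hne (le_of_lt hpp') (le_of_lt hqq') hpp'' hqq''
    (hpp'.le.trans hp'q.le)
  exact absurd hp'q (not_lt_of_gt this)

theorem neighborly_strict_subinterval (R : ℚ → ℚ → Prop) (hR : IsOracle R)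
    (hne : ∀ c : ℚ, ¬ R c c)
    (a b : ℚ) (hab : a < b) (h : R a b) :
    ∃ c d : ℚ, a < c ∧ c ≤ d ∧ d < b ∧ R c d := by
  -- a is not in every Yes interval
  have ha : ¬ (∀ x y : ℚ, x ≤ y → R x y → x ≤ a ∧ a ≤ y) := fun hc => hne a (hR.closed a hc)
  have hb : ¬ (∀ x y : ℚ, x ≤ y → R x y → x ≤ b ∧ b ≤ y) := fun hc => hne b (hR.closed b hc)
  push_neg at ha hb
  obtain ⟨p, q, hpq, h1, hpa⟩ := ha
  obtain ⟨p', q', hpq', h2, hqb⟩ := hb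
  -- [p,q] must intersect [a,b] with a < p
  have hap : a < p := by
    rcases lt_or_ge a p with h' | h'
    · exact h'
    · exact absurd (hpa h') (not_lt_of_gt (yes_meet R hR hne hpq hab.le h1 h h'))
  have hq'b : q' < b := by
    rcases lt_or_ge q' b with h' | h'
    · exact h'
    · have hbp' : b ≤ p' := by
        by_contra hc
        push_neg at hc
        exact absurd h' (not_le_of_gt (hqb hc.le))
      have := yes_meet R hR hne hab.le hpq' h h2 (hab.le.trans hbp')
      exact absurd hbp' (not_le_of_gt this)
  rcases le_total p p' with hpp | hpp <;> rcases le_total q q' with hqq | hqq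
  · exact ⟨p', q, lt_of_lt_of_le hap hpp, (yes_meet R hR hne hpq hpq' h1 h2 hpp).le,
      lt_of_le_of_lt hqq hq'b, yes_inter R hR hne hpq hpq' h1 h2 hpp hqq⟩
  · exact ⟨p', q', lt_of_lt_of_le hap hpp, hpq', hq'b, h2⟩
  · have hqb' : q < b := lt_of_le_of_lt hqq hq'b
    exact ⟨p, q, hap, hpq, hqb', h1⟩
  · exact ⟨p, q', hap, (yes_meet R hR hne hpq' hpq h2 h1 hpp).le, hq'b,
      yes_inter R hR hne hpq' hpq h2 h1 hpp hqq⟩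
end

section
/- Let R be an oracle, n a natural number, and c : Fin (n+2) → ℚ a strictly monotone sequence of rationals (a finite partition c 0 < c 1 < ⋯ < c (n+1)) such that R (c 0) (c (n+1)) holds and ¬ R (c i) (c i) for every index i (no partition point, including the endpoints, is a Yes singleton). Then there is exactly one index i with 0 ≤ i ≤ n such that R (c i) (c (i+1)); that is, exactly one subinterval of the partition is a Yes interval. -/
/-! Splitting a Yes interval at a point that is not a Yes singleton yields exactly one Yes half;
existence of a Yes piece of a partition follows by induction on the number of pieces, and
uniqueness because two Yes pieces would give two Yes halves of their hull. -/

namespace IsOracle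

variable {R : ℚ → ℚ → Prop} {a b c : ℚ}

theorem yes_left_or_yes_right (hR : IsOracle R) (hab : R a b) (hac : a < c) (hcb : c < b)
    (hc : ¬ R c c) : R a c ∨ R c b := by
  have := (hR.separating a b c (hac.trans hcb).le hab hac hcb).resolve_left hc
  tauto

theorem not_yes_left_and_yes_right (hR : IsOracle R) (hac : a < c) (hcb : c < b)
    (hc : ¬ R c c) : ¬ (R a c ∧ R c b) := by
  rintro ⟨hleft, hright⟩
  have hab : R a b := hR.consistent a c a b le_rfl hac.le hcb.le hleft
  exact ((hR.separating a b c (hac.trans hcb).le hab hac hcb).resolve_left hc)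
    (iff_of_true hleft hright)

theorem exists_yes_piece (hR : IsOracle R) :
    ∀ {n : ℕ} (c : Fin (n + 2) → ℚ), StrictMono c → (∀ i, ¬ R (c i) (c i)) →
      R (c 0) (c (Fin.last (n + 1))) → ∃ i : Fin (n + 1), R (c i.castSucc) (c i.succ)
  | 0, c, _, _, hYes => ⟨0, hYes⟩
  | n + 1, c, hmono, hsing, hYes => by
    rcases hR.yes_left_or_yes_right hYes (hmono (Fin.succ_pos 0))
        (hmono (Fin.succ_lt_succ_iff.2 (Fin.last_pos))) (hsing 1) with hfirst | hrest
    · exact ⟨0, hfirst⟩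
    · obtain ⟨i, hi⟩ := hR.exists_yes_piece (Fin.tail c) (hmono.comp Fin.strictMono_succ)
        (fun i => hsing i.succ) hrest
      exact ⟨i.succ, hi⟩

theorem eq_of_yes_pieces {n : ℕ} {c : Fin (n + 2) → ℚ} (hR : IsOracle R) (hmono : StrictMono c)
    (hsing : ∀ i, ¬ R (c i) (c i)) {i j : Fin (n + 1)}
    (hi : R (c i.castSucc) (c i.succ)) (hj : R (c j.castSucc) (c j.succ)) : i = j := by
  wlog hij : i < j generalizing i j
  · rcases (not_lt.1 hij).lt_or_eq with hji | hji
    · exact (this hj hi hji).symm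
    · exact hji.symm
  have hgap : c i.succ ≤ c j.castSucc := hmono.monotone (Fin.succ_le_castSucc_iff.2 hij)
  have hj_lt : c j.castSucc < c j.succ := hmono Fin.castSucc_lt_succ
  have hright : R (c i.succ) (c j.succ) := hR.consistent _ _ _ _ hgap hj_lt.le le_rfl hj
  exact absurd ⟨hi, hright⟩ (hR.not_yes_left_and_yes_right (hmono Fin.castSucc_lt_succ)
    (hgap.trans_lt hj_lt) (hsing _))

end IsOracle

theorem partition_unique_yes (R : ℚ → ℚ → Prop) (hR : IsOracle R)
    (n : ℕ) (c : Fin (n + 2) → ℚ) (hmono : StrictMono c)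
    (hYes : R (c 0) (c (Fin.last (n + 1))))
    (hsing : ∀ i : Fin (n + 2), ¬ R (c i) (c i)) :
    ∃! i : Fin (n + 1), R (c i.castSucc) (c i.succ) := by
  obtain ⟨i, hi⟩ := hR.exists_yes_piece c hmono hsing hYes
  exact ⟨i, hi, fun j hj => hR.eq_of_yes_pieces hmono hsing hj hi⟩
end

section
/- Let R be an oracle and let a ≤ b be rationals with ¬ R a b (a:b is a No interval). Then there exist rationals c ≤ d with R c d such that the interval c:d is disjoint from a:b (i.e. d < a or b < c). -/
/-- Escape to the right: from a Yes interval [t,q] with ¬R t t, get a Yes interval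
strictly right of t, or a root strictly left of t. -/
lemma escapeR (R : ℚ → ℚ → Prop) (hR : IsOracle R) (t q : ℚ) (htq : t ≤ q)
    (hRtq : R t q) (htt : ¬ R t t) :
    (∃ c d : ℚ, c ≤ d ∧ R c d ∧ t < c) ∨ (∃ m : ℚ, m < t ∧ R m m) := by
  have hcl := hR.closed t
  have hne : ¬ ∀ x y : ℚ, x ≤ y → R x y → x ≤ t ∧ t ≤ y := fun hall => htt (hcl hall)
  push_neg at hne
  obtain ⟨x, y, hxy, hRxy, hmiss⟩ := hne
  by_cases hx : t < x
  · exact Or.inl ⟨x, y, hxy, hRxy, hx⟩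
  · push_neg at hx
    have hyt : y < t := hmiss hx
    set m : ℚ := (y + t) / 2 with hm
    have hym : y < m := by rw [hm]; linarith
    have hmt : m < t := by rw [hm]; linarith
    have hRxq : R x q := hR.consistent t q x q (le_of_lt (lt_of_le_of_lt hxy hyt)) htq le_rfl hRtq
    have hsep := hR.separating x q m (le_trans (le_of_lt (lt_of_le_of_lt hxy hyt)) htq) hRxq
      (lt_of_le_of_lt hxy hym) (lt_of_lt_of_le hmt htq)
    rcases hsep with hroot | hiff
    · exact Or.inr ⟨m, hmt, hroot⟩
    · exfalso
      have h1 : R x m := hR.consistent x y x m le_rfl hxy (le_of_lt hym) hRxy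
      have h2 : R m q := hR.consistent t q m q (le_of_lt hmt) htq le_rfl hRtq
      exact hiff (iff_of_true h1 h2)

/-- Escape to the left: from a Yes interval [p,t] with ¬R t t, get a Yes interval
strictly left of t, or a root strictly right of t. -/
lemma escapeL (R : ℚ → ℚ → Prop) (hR : IsOracle R) (p t : ℚ) (hpt : p ≤ t)
    (hRpt : R p t) (htt : ¬ R t t) :
    (∃ c d : ℚ, c ≤ d ∧ R c d ∧ d < t) ∨ (∃ m : ℚ, t < m ∧ R m m) := by
  have hcl := hR.closed t
  have hne : ¬ ∀ x y : ℚ, x ≤ y → R x y → x ≤ t ∧ t ≤ y := fun hall => htt (hcl hall)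
  push_neg at hne
  obtain ⟨x, y, hxy, hRxy, hmiss⟩ := hne
  by_cases hy : y < t
  · exact Or.inl ⟨x, y, hxy, hRxy, hy⟩
  · push_neg at hy
    have htx : t < x := by
      by_contra h'
      push_neg at h'
      exact absurd hy (not_le_of_gt (hmiss h'))
    set m : ℚ := (t + x) / 2 with hm
    have htm : t < m := by rw [hm]; linarith
    have hmx : m < x := by rw [hm]; linarith
    have hRpy : R p y := hR.consistent p t p y le_rfl hpt
      (le_trans (le_of_lt htx) hxy) hRpt
    have hsep := hR.separating p y m (le_trans hpt (le_trans (le_of_lt htx) hxy)) hRpy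
      (lt_of_le_of_lt hpt htm) (lt_of_lt_of_le hmx hxy)
    rcases hsep with hroot | hiff
    · exact Or.inr ⟨m, htm, hroot⟩
    · exfalso
      have h1 : R p m := hR.consistent p t p m le_rfl hpt (le_of_lt htm) hRpt
      have h2 : R m y := hR.consistent x y m y (le_of_lt hmx) hxy le_rfl hRxy
      exact hiff (iff_of_true h1 h2)

/-- Finishing move on the right: a Yes interval [b,q] yields a disjoint Yes interval. -/
lemma finishR (R : ℚ → ℚ → Prop) (hR : IsOracle R) (a b q : ℚ) (hab : a ≤ b)
    (h : ¬ R a b) (hbq : b ≤ q) (hRbq : R b q) :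
    ∃ c d : ℚ, c ≤ d ∧ R c d ∧ (d < a ∨ b < c) := by
  have noroot : ∀ m : ℚ, a ≤ m → m ≤ b → ¬ R m m := fun m h1 h2 h' =>
    h (hR.consistent m m a b h1 le_rfl h2 h')
  rcases escapeR R hR b q hbq hRbq (noroot b hab le_rfl) with ⟨c, d, hcd, hRcd, hbc⟩ | ⟨m, hmb, hmm⟩
  · exact ⟨c, d, hcd, hRcd, Or.inr hbc⟩
  · by_cases ham : a ≤ m
    · exact absurd hmm (noroot m ham (le_of_lt hmb))
    · push_neg at ham
      exact ⟨m, m, le_rfl, hmm, Or.inl ham⟩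

/-- Finishing move on the left: a Yes interval [p,a] yields a disjoint Yes interval. -/
lemma finishL (R : ℚ → ℚ → Prop) (hR : IsOracle R) (a b p : ℚ) (hab : a ≤ b)
    (h : ¬ R a b) (hpa : p ≤ a) (hRpa : R p a) :
    ∃ c d : ℚ, c ≤ d ∧ R c d ∧ (d < a ∨ b < c) := by
  have noroot : ∀ m : ℚ, a ≤ m → m ≤ b → ¬ R m m := fun m h1 h2 h' =>
    h (hR.consistent m m a b h1 le_rfl h2 h')
  rcases escapeL R hR p a hpa hRpa (noroot a le_rfl hab) with ⟨c, d, hcd, hRcd, hda⟩ | ⟨m, ham, hmm⟩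
  · exact ⟨c, d, hcd, hRcd, Or.inl hda⟩
  · by_cases hmb : m ≤ b
    · exact absurd hmm (noroot m (le_of_lt ham) hmb)
    · push_neg at hmb
      exact ⟨m, m, le_rfl, hmm, Or.inr hmb⟩

theorem no_interval_has_disjoint_yes (R : ℚ → ℚ → Prop) (hR : IsOracle R)
    (a b : ℚ) (hab : a ≤ b) (h : ¬ R a b) :
    ∃ c d : ℚ, c ≤ d ∧ R c d ∧ (d < a ∨ b < c) := by
  have noroot : ∀ m : ℚ, a ≤ m → m ≤ b → ¬ R m m := fun m h1 h2 h' =>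
    h (hR.consistent m m a b h1 le_rfl h2 h')
  have haa : ¬ R a a := noroot a le_rfl hab
  have hbb : ¬ R b b := noroot b hab le_rfl
  -- a Yes interval [p, b] with p ≤ a yields a disjoint Yes interval
  have fromLeft : ∀ p : ℚ, p ≤ a → R p b → ∃ c d : ℚ, c ≤ d ∧ R c d ∧ (d < a ∨ b < c) := by
    intro p hpa hRpb
    rcases eq_or_lt_of_le hab with hEq | hLt
    · exact finishL R hR a b p hab h hpa (hEq ▸ hRpb)
    · rcases eq_or_lt_of_le hpa with hEq' | hLt'
      · exact absurd (hEq' ▸ hRpb) h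
      · have hsep := hR.separating p b a (le_trans hpa hab) hRpb hLt' hLt
        rcases hsep with hroot | hiff
        · exact absurd hroot haa
        · have hRpa : R p a := by
            by_contra hn
            exact hiff (iff_of_false hn h)
          exact finishL R hR a b p hab h hpa hRpa
  -- get a big Yes interval containing [a, b]
  obtain ⟨x0, y0, hx0y0, hY⟩ := hR.exists_yes
  set p : ℚ := min x0 a with hp
  set q : ℚ := max y0 b with hq
  have hpa : p ≤ a := min_le_right x0 a
  have hbq : b ≤ q := le_max_right y0 b
  have hpq : R p q := hR.consistent x0 y0 p q (min_le_left x0 a) hx0y0 (le_max_left y0 b) hY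
  rcases eq_or_lt_of_le hbq with hqb | hqb
  · -- q = b : work on the left
    exact fromLeft p hpa (hqb ▸ hpq)
  · -- b < q
    rcases eq_or_lt_of_le (le_trans hpa hab) with hpb | hpb
    · -- p = b, hence p = a = b, and R b q holds
      exact finishR R hR a b q hab h (le_of_lt hqb) (hpb ▸ hpq)
    · have hsep := hR.separating p q b (le_trans (le_trans hpa hab) (le_of_lt hqb)) hpq hpb hqb
      rcases hsep with hroot | hiff
      · exact absurd hroot hbb
      · by_cases hRbq : R b q
        · exact finishR R hR a b q hab h (le_of_lt hqb) hRbq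
        · have hRpb : R p b := by
            by_contra hn
            exact hiff (iff_of_false hn hRbq)
          exact fromLeft p hpa hRpb
end

section
/- Let R be an oracle and let a ≤ b be rationals with R a b and ¬ R a a (a:b is a Yes interval but the singleton a:a is a No singleton). Then there exists a rational c with a < c < b such that R c b (the interval c:b is a Yes interval). -/
theorem exclude_left_singleton (R : ℚ → ℚ → Prop) (hR : IsOracle R)
    (a b : ℚ) (hab : a ≤ b) (hY : R a b) (hN : ¬ R a a) :
    ∃ c : ℚ, a < c ∧ c < b ∧ R c b := by
  have hlt : a < b := by
    rcases lt_or_eq_of_le hab with h | h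
    · exact h
    · exact absurd (h ▸ hY) hN
  -- From closedness, there is a Yes interval [u,v] missing a
  have hmiss : ∃ u v : ℚ, u ≤ v ∧ R u v ∧ ¬ (u ≤ a ∧ a ≤ v) := by
    by_contra h
    push_neg at h
    exact hN (hR.closed a (fun u v huv hYuv => h u v huv hYuv))
  obtain ⟨u, v, huv, hYuv, hmiss⟩ := hmiss
  have hcase : a < u ∨ v < a := by
    by_contra h
    push_neg at h
    exact hmiss ⟨h.1, h.2⟩
  rcases hcase with hau | hva
  · -- a < u
    set m : ℚ := (a + b) / 2 with hm
    have ham : a < m := by rw [hm]; linarith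
    have hmb : m < b := by rw [hm]; linarith
    set c : ℚ := min u m with hc
    have hac : a < c := lt_min hau ham
    have hcb : c < b := lt_of_le_of_lt (min_le_right u m) hmb
    set V : ℚ := max b v with hV
    have hbV : b ≤ V := le_max_left b v
    have hvV : v ≤ V := le_max_right b v
    have hRaV : R a V := hR.consistent a b a V le_rfl hab hbV hY
    have hRcV : R c V := hR.consistent u v c V (min_le_left u m) huv hvV hYuv
    have hcV : c < V := lt_of_lt_of_le hcb hbV
    -- either R c c, or ¬ R a c
    rcases hR.separating a V c (le_of_lt (lt_of_lt_of_le hlt hbV)) hRaV hac hcV with hcc | hne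
    · exact ⟨c, hac, hcb, hR.consistent c c c b le_rfl le_rfl (le_of_lt hcb) hcc⟩
    · have hnac : ¬ R a c := fun h => hne (iff_of_true h hRcV)
      rcases hR.separating a b c hab hY hac hcb with hcc | hne2
      · exact ⟨c, hac, hcb, hR.consistent c c c b le_rfl le_rfl (le_of_lt hcb) hcc⟩
      · have : R c b := by
          by_contra hno
          exact hne2 (iff_of_false hnac hno)
        exact ⟨c, hac, hcb, this⟩
  · -- v < a : contradiction
    exfalso
    have hRub : R u b := hR.consistent u v u b le_rfl huv (le_of_lt (lt_of_lt_of_le hva hab)) hYuv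
    have hRua : R u a := hR.consistent u v u a le_rfl huv (le_of_lt hva) hYuv
    have hua : u < a := lt_of_le_of_lt huv hva
    rcases hR.separating u b a (le_of_lt (lt_trans hua hlt)) hRub hua hlt with haa | hne
    · exact hN haa
    · exact hne (iff_of_true hRua hY)
end

section
/- Let R be an oracle and let a ≤ b be rationals with R a b. Then either R a a holds, or R b b holds, or there exist rationals c, d with a < c ≤ d < b such that R c d. (This expresses that every Yes interval of an oracle traps the oracle's value: a ≤ r ≤ b.) -/
/-- If two yes intervals are disjoint (one strictly left of the other), there is a point
between them at which R holds. -/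
lemma gap_point (R : ℚ → ℚ → Prop) (hR : IsOracle R) (p q u v : ℚ)
    (hpq : p ≤ q) (hqu : q < u) (huv : u ≤ v) (h1 : R p q) (h2 : R u v) :
    ∃ c, q < c ∧ c < u ∧ R c c := by
  set c := (q + u) / 2 with hc
  have hqc : q < c := by rw [hc]; linarith
  have hcu : c < u := by rw [hc]; linarith
  have hpv : R p v := hR.consistent u v p v (by linarith) huv le_rfl h2
  have hsep := hR.separating p v c (by linarith) hpv (by linarith) (by linarith)
  rcases hsep with h3 | h3
  · exact ⟨c, hqc, hcu, h3⟩
  · exfalso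
    have hpc : R p c := hR.consistent p q p c le_rfl hpq (le_of_lt hqc) h1
    have hcv : R c v := hR.consistent u v c v (le_of_lt hcu) huv le_rfl h2
    exact h3 (iff_of_true hpc hcv)

theorem yes_traps_oracle (R : ℚ → ℚ → Prop) (hR : IsOracle R)
    (a b : ℚ) (hab : a ≤ b) (h : R a b) :
    R a a ∨ R b b ∨ ∃ c d : ℚ, a < c ∧ c ≤ d ∧ d < b ∧ R c d := by
  by_cases haa : R a a
  · exact Or.inl haa
  by_cases hbb : R b b
  · exact Or.inr (Or.inl hbb)
  refine Or.inr (Or.inr ?_)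
  by_cases hex : ∃ r, R r r
  · obtain ⟨r, hr⟩ := hex
    have har : a ≤ r := by
      by_contra hlt
      push_neg at hlt
      obtain ⟨c, hc1, hc2, hc3⟩ := gap_point R hR r r a b le_rfl hlt hab hr h
      have := hR.rooted c r hc3 hr
      linarith
    have hrb : r ≤ b := by
      by_contra hlt
      push_neg at hlt
      obtain ⟨c, hc1, hc2, hc3⟩ := gap_point R hR a b r r hab hlt le_rfl h hr
      have := hR.rooted c r hc3 hr
      linarith
    have h1 : a < r := lt_of_le_of_ne har (fun e => haa (e ▸ hr))
    have h2 : r < b := lt_of_le_of_ne hrb (fun e => hbb (e.symm ▸ hr))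
    exact ⟨r, r, h1, le_rfl, h2, hr⟩
  · -- no point at all
    have nopt : ∀ c : ℚ, ¬ R c c := fun c hc => hex ⟨c, hc⟩
    -- from ¬ R a a: a yes interval missing a
    have hA : ∃ p q : ℚ, p ≤ q ∧ R p q ∧ ¬ (p ≤ a ∧ a ≤ q) := by
      by_contra hcon
      push_neg at hcon
      exact haa (hR.closed a (fun p q hpq hR' => hcon p q hpq hR'))
    have hB : ∃ p q : ℚ, p ≤ q ∧ R p q ∧ ¬ (p ≤ b ∧ b ≤ q) := by
      by_contra hcon
      push_neg at hcon
      exact hbb (hR.closed b (fun p q hpq hR' => hcon p q hpq hR'))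
    obtain ⟨p, q, hpq, hRpq, hma⟩ := hA
    obtain ⟨p', q', hpq', hRpq', hmb⟩ := hB
    have hap : a < p := by
      rcases lt_or_ge a p with h' | h'
      · exact h'
      · exfalso
        have hqa : q < a := by
          rcases lt_or_ge q a with h'' | h''
          · exact h''
          · exact absurd ⟨h', h''⟩ hma
        obtain ⟨c, _, _, hc⟩ := gap_point R hR p q a b hpq hqa hab hRpq h
        exact nopt c hc
    have hq'b : q' < b := by
      rcases lt_or_ge q' b with h' | h'
      · exact h'
      · exfalso
        have hbp' : b < p' := by
          rcases lt_or_ge b p' with h'' | h''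
          · exact h''
          · exact absurd ⟨h'', h'⟩ hmb
        obtain ⟨c, _, _, hc⟩ := gap_point R hR a b p' q' hab hbp' hpq' h hRpq'
        exact nopt c hc
    by_cases hqb : q < b
    · exact ⟨p, q, hap, hpq, hqb, hRpq⟩
    push_neg at hqb
    by_cases hap' : a < p'
    · exact ⟨p', q', hap', hpq', hq'b, hRpq'⟩
    push_neg at hap'
    -- now p' ≤ a < p and q' < b ≤ q
    have hpq'le : p ≤ q' := by
      by_contra hlt
      push_neg at hlt
      obtain ⟨c, _, _, hc⟩ := gap_point R hR p' q' p q hpq' hlt hpq hRpq' hRpq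
      exact nopt c hc
    rcases eq_or_lt_of_le hpq'le with heq | hlt
    · -- p = q' : contradiction
      exfalso
      have hRp'q : R p' q := hR.consistent p q p' q (by linarith) hpq le_rfl hRpq
      have hsep := hR.separating p' q p (by linarith) hRp'q (by linarith) (by linarith)
      rcases hsep with hc | hc
      · exact nopt p hc
      · have h1 : R p' p := hR.consistent p' q' p' p le_rfl hpq' (le_of_eq heq.symm) hRpq'
        exact hc (iff_of_true h1 hRpq)
    · -- p < q'
      by_cases hpq'' : R p q'
      · exact ⟨p, q', hap, hpq'le, hq'b, hpq''⟩
      exfalso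
      have hs1 := hR.separating p q q' hpq hRpq hlt (by linarith)
      have hs2 := hR.separating p' q' p hpq' hRpq' (by linarith) hlt
      rcases hs1 with hc | hs1
      · exact nopt q' hc
      rcases hs2 with hc | hs2
      · exact nopt p hc
      have h1 : R q' q := by tauto
      have h2 : R p' p := by tauto
      obtain ⟨c, _, _, hc⟩ := gap_point R hR p' p q' q (by linarith) hlt (by linarith) h2 h1
      exact nopt c hc
end

section
/- (Transitive Law) Let R, S, and T be oracles with R < S and S < T. Then R < T. -/
/-- `OracleLT R S` : `R` is less than `S` as oracles. -/
def OracleLT (R S : ℚ → ℚ → Prop) : Prop :=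
  ∃ a b c d : ℚ, a ≤ b ∧ c ≤ d ∧ R a b ∧ S c d ∧ b < c

/-- A point strictly between two Yes intervals of an oracle is a root. -/
lemma root_between (S : ℚ → ℚ → Prop) (hS : IsOracle S)
    {e f c d : ℚ} (hef : e ≤ f) (hcd : c ≤ d) (hSef : S e f) (hScd : S c d)
    {x : ℚ} (h1 : f < x) (h2 : x < c) : S x x := by
  have hed : e ≤ d := le_trans hef (le_trans (le_of_lt h1) (le_trans (le_of_lt h2) hcd))
  have hSed : S e d := hS.consistent c d e d (le_trans hef (le_trans h1.le h2.le)) hcd le_rfl hScd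
  have hex : e < x := lt_of_le_of_lt hef h1
  have hxd : x < d := lt_of_lt_of_le h2 hcd
  rcases hS.separating e d x hed hSed hex hxd with h | h
  · exact h
  · exfalso
    apply h
    constructor
    · intro _
      exact hS.consistent c d x d h2.le hcd le_rfl hScd
    · intro _
      exact hS.consistent e f e x le_rfl hef h1.le hSef

theorem oracleLT_trans (R S T : ℚ → ℚ → Prop)
    (hR : IsOracle R) (hS : IsOracle S) (hT : IsOracle T)
    (hRS : OracleLT R S) (hST : OracleLT S T) : OracleLT R T := by
  obtain ⟨a, b, c, d, hab, hcd, hRab, hScd, hbc⟩ := hRS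
  obtain ⟨e, f, g, h, hef, hgh, hSef, hTgh, hfg⟩ := hST
  refine ⟨a, b, g, h, hab, hgh, hRab, hTgh, ?_⟩
  by_contra hgb
  push_neg at hgb
  -- then f < g ≤ b < c, so f < c; two distinct roots between f and c: contradiction
  have hfc : f < c := lt_of_lt_of_le hfg (le_trans hgb hbc.le)
  set x := f + (c - f) / 3 with hx
  set y := f + 2 * ((c - f) / 3) with hy
  have hpos : 0 < (c - f) / 3 := by linarith
  have hx1 : f < x := by simp [hx, hpos]
  have hx2 : x < c := by rw [hx]; linarith
  have hy1 : f < y := by rw [hy]; linarith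
  have hy2 : y < c := by rw [hy]; linarith
  have hxy : x < y := by rw [hx, hy]; linarith
  have hxx := root_between S hS hef hcd hSef hScd hx1 hx2
  have hyy := root_between S hS hef hcd hSef hScd hy1 hy2
  exact absurd (hS.rooted x y hxx hyy) (ne_of_lt hxy)
end

section
/- Let R and S be oracles such that every R-Yes interval intersects every S-Yes interval: whenever a ≤ b with R a b and c ≤ d with S c d, there is a rational q with a ≤ q ≤ b and c ≤ q ≤ d. Then R = S, i.e. for all rationals a ≤ b, R a b holds if and only if S a b holds. -/
/-- Any two Yes intervals of an oracle overlap (one-sided form). -/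
lemma yes_overlap {S : ℚ → ℚ → Prop} (hS : IsOracle S) {a b c d : ℚ}
    (hab : a ≤ b) (hcd : c ≤ d) (h1 : S a b) (h2 : S c d) : c ≤ b := by
  by_contra hbc
  push_neg at hbc  -- b < c
  set m : ℚ := (b + c) / 2 with hm
  have hbm : b < m := by rw [hm]; linarith
  have hmc : m < c := by rw [hm]; linarith
  have hbd : b ≤ d := by linarith
  have had : a ≤ d := le_trans hab hbd
  have hSad : S a d := hS.consistent a b a d le_rfl hab hbd h1
  have ham : a < m := lt_of_le_of_lt hab hbm
  have hmd : m < d := lt_of_lt_of_le hmc hcd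
  rcases hS.separating a d m had hSad ham hmd with hmm | hne
  · have hSam : S a m := hS.consistent m m a m ham.le le_rfl le_rfl hmm
    rcases eq_or_lt_of_le hab with heq | hab'
    · subst heq
      exact absurd (hS.rooted a m h1 hmm) (ne_of_lt ham)
    · rcases hS.separating a m b ham.le hSam hab' hbm with hbb | hne2
      · exact absurd (hS.rooted b m hbb hmm) (ne_of_lt hbm)
      · have hSbm : S b m := hS.consistent m m b m hbm.le le_rfl le_rfl hmm
        exact hne2 ⟨fun _ => hSbm, fun _ => h1⟩
  · have h3 : S a m := hS.consistent a b a m le_rfl hab hbm.le h1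
    have h4 : S m d := hS.consistent c d m d hmc.le hcd le_rfl h2
    exact hne ⟨fun _ => h4, fun _ => h3⟩

/-- If an interval meets every Yes interval of an oracle, it is itself Yes. -/
lemma meets_all_yes {S : ℚ → ℚ → Prop} (hS : IsOracle S) {a b : ℚ} (hab : a ≤ b)
    (hmeet : ∀ c d : ℚ, c ≤ d → S c d → c ≤ b ∧ a ≤ d) : S a b := by
  by_cases hp : ∃ p : ℚ, S p p
  · obtain ⟨p, hpp⟩ := hp
    obtain ⟨h1, h2⟩ := hmeet p p le_rfl hpp
    exact hS.consistent p p a b h2 le_rfl h1 hpp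
  · push_neg at hp
    by_contra hnab
    rcases eq_or_lt_of_le hab with heq | hlt
    · subst heq
      exact hp a (hS.closed a fun p q hpq hSpq => hmeet p q hpq hSpq)
    · obtain ⟨c, d, hcd, hScd⟩ := hS.exists_yes
      have hSuv : S (min a c) (max b d) :=
        hS.consistent c d (min a c) (max b d) (min_le_right a c) hcd (le_max_right b d) hScd
      have hua : min a c ≤ a := min_le_left a c
      have hbv : b ≤ max b d := le_max_left b d
      have hav : a < max b d := lt_of_lt_of_le hlt hbv
      have hSav : S a (max b d) := by
        rcases eq_or_lt_of_le hua with hequ | hlt_u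
        · exact hequ ▸ hSuv
        · rcases hS.separating (min a c) (max b d) a
            (le_trans hua (le_trans hab hbv)) hSuv hlt_u hav with haa | hne
          · exact absurd haa (hp a)
          · by_cases hSua : S (min a c) a
            · exfalso
              apply hp a
              apply hS.closed
              intro p q hpq hSpq
              exact ⟨yes_overlap hS hua hpq hSua hSpq, (hmeet p q hpq hSpq).2⟩
            · by_contra hSav'
              exact hne (iff_of_false hSua hSav')
      rcases eq_or_lt_of_le hbv with heqv | hltv
      · exact hnab (by rw [heqv]; exact hSav)
      · rcases hS.separating a (max b d) b hav.le hSav hlt hltv with hbb | hne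
        · exact hp b hbb
        · have hSbv : S b (max b d) := by
            by_contra h'
            exact hne (iff_of_false hnab h')
          apply hp b
          apply hS.closed
          intro p q hpq hSpq
          exact ⟨(hmeet p q hpq hSpq).1, yes_overlap hS hpq hbv hSpq hSbv⟩

theorem overlap_implies_equal (R S : ℚ → ℚ → Prop) (hR : IsOracle R) (hS : IsOracle S)
    (h : ∀ a b c d : ℚ, a ≤ b → R a b → c ≤ d → S c d →
      ∃ q : ℚ, a ≤ q ∧ q ≤ b ∧ c ≤ q ∧ q ≤ d) :
    ∀ a b : ℚ, a ≤ b → (R a b ↔ S a b) := by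
  intro a b hab
  constructor
  · intro hRab
    apply meets_all_yes hS hab
    intro c d hcd hScd
    obtain ⟨q, h1, h2, h3, h4⟩ := h a b c d hab hRab hcd hScd
    exact ⟨le_trans h3 h2, le_trans h1 h4⟩
  · intro hSab
    apply meets_all_yes hR hab
    intro c d hcd hRcd
    obtain ⟨q, h1, h2, h3, h4⟩ := h c d a b hcd hRcd hab hSab
    exact ⟨le_trans h1 h4, le_trans h3 h2⟩
end

section
/- Let R and S be oracles such that whenever a ≤ b with R a b, there exist rationals c, d with a ≤ c ≤ d ≤ b and S c d (every R-Yes interval contains an S-Yes subinterval). Then R = S, i.e. for all rationals a ≤ b, R a b holds if and only if S a b holds. -/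
private lemma meet_aux {R : ℚ → ℚ → Prop} (hR : IsOracle R) {a b c d : ℚ}
    (hab : a ≤ b) (hcd : c ≤ d) (h1 : R a b) (h2 : R c d) (hbc : b < c) : False := by
  have had : R a d := hR.consistent a b a d le_rfl hab (hbc.le.trans hcd) h1
  set c1 : ℚ := (2*b + c)/3 with hc1
  set c2 : ℚ := (b + 2*c)/3 with hc2
  have hb1 : b < c1 := by rw [hc1]; linarith
  have h12 : c1 < c2 := by rw [hc1, hc2]; linarith
  have h2c : c2 < c := by rw [hc2]; linarith
  have root : ∀ x : ℚ, b < x → x < c → R x x := by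
    intro x hbx hxc
    have hax : a < x := lt_of_le_of_lt hab hbx
    have hxd : x < d := lt_of_lt_of_le hxc hcd
    rcases hR.separating a d x (hax.le.trans hxd.le) had hax hxd with hx | hiff
    · exact hx
    · exfalso
      exact hiff ⟨fun _ => hR.consistent c d x d hxc.le hcd le_rfl h2,
        fun _ => hR.consistent a b a x le_rfl hab hbx.le h1⟩
  have e := hR.rooted c1 c2 (root c1 hb1 (h12.trans h2c)) (root c2 (hb1.trans h12) h2c)
  exact absurd e (ne_of_lt h12)

/-- Any two Yes intervals of an oracle intersect. -/
private lemma meet {R : ℚ → ℚ → Prop} (hR : IsOracle R) {a b c d : ℚ}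
    (hab : a ≤ b) (hcd : c ≤ d) (h1 : R a b) (h2 : R c d) : a ≤ d ∧ c ≤ b := by
  constructor
  · by_contra hlt
    exact meet_aux hR hcd hab h2 h1 (lt_of_not_ge hlt)
  · by_contra hlt
    exact meet_aux hR hab hcd h1 h2 (lt_of_not_ge hlt)

/-- An interval meeting every Yes interval is itself Yes. -/
private lemma fromMeets {R : ℚ → ℚ → Prop} (hR : IsOracle R) {a b : ℚ} (hab : a ≤ b)
    (H : ∀ c d : ℚ, c ≤ d → R c d → a ≤ d ∧ c ≤ b) : R a b := by
  by_cases hroot : ∃ x : ℚ, R x x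
  · obtain ⟨x, hx⟩ := hroot
    obtain ⟨hax, hxb⟩ := H x x le_rfl hx
    exact hR.consistent x x a b hax le_rfl hxb hx
  · rcases eq_or_lt_of_le hab with heq | hlt
    · subst heq
      exact hR.closed a fun c d hcd hRcd => ⟨(H c d hcd hRcd).2, (H c d hcd hRcd).1⟩
    -- no root, a < b
    have hpq : ∃ p q : ℚ, p ≤ q ∧ R p q ∧ a < p := by
      by_contra hcon
      push_neg at hcon
      refine hroot ⟨a, hR.closed a fun c d hcd hRcd => ?_⟩
      have h1 := (H c d hcd hRcd).1
      have h2 := hcon c d hcd hRcd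
      exact ⟨h2, by
        by_contra hda
        push_neg at hda
        -- d < a contradicts a ≤ d
        exact absurd h1 (not_le.mpr hda)⟩
    have hrs : ∃ r s : ℚ, r ≤ s ∧ R r s ∧ s < b := by
      by_contra hcon
      push_neg at hcon
      refine hroot ⟨b, hR.closed b fun c d hcd hRcd => ?_⟩
      have h2 := (H c d hcd hRcd).2
      have h1 := hcon c d hcd hRcd
      exact ⟨h2, h1⟩
    obtain ⟨p, q, hpq, hRpq, hap⟩ := hpq
    obtain ⟨r, s, hrs, hRrs, hsb⟩ := hrs
    set u : ℚ := min a p with hu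
    set v : ℚ := max b q with hv
    have hua : u ≤ a := min_le_left _ _
    have hbv : b ≤ v := le_max_left _ _
    have hRuv : R u v := hR.consistent p q u v (min_le_right _ _) hpq (le_max_right _ _) hRpq
    have hav : a < v := lt_of_lt_of_le hlt hbv
    -- step 1: R a v
    have hRav : R a v := by
      rcases eq_or_lt_of_le hua with hequa | hlta
      · rw [← hequa]; exact hRuv
      · rcases hR.separating u v a (hua.trans hav.le) hRuv hlta hav with haa | hiff
        · exact absurd ⟨a, haa⟩ hroot
        · have hnua : ¬ R u a := by
            intro hua'
            exact absurd (meet hR hua hpq hua' hRpq).2 (not_le.mpr hap)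
          tauto
    -- step 2: shrink right endpoint to b
    rcases eq_or_lt_of_le hbv with heqbv | hltbv
    · rw [heqbv]; exact hRav
    · rcases hR.separating a v b (hlt.le.trans hbv) hRav hlt hltbv with hbb | hiff
      · exact absurd ⟨b, hbb⟩ hroot
      · have hnbv : ¬ R b v := by
          intro hbv'
          exact absurd (meet hR hltbv.le hrs hbv' hRrs).1 (not_le.mpr hsb)
        tauto

theorem subinterval_implies_equal (R S : ℚ → ℚ → Prop) (hR : IsOracle R) (hS : IsOracle S)
    (h : ∀ a b : ℚ, a ≤ b → R a b → ∃ c d : ℚ, a ≤ c ∧ c ≤ d ∧ d ≤ b ∧ S c d) :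
    ∀ a b : ℚ, a ≤ b → (R a b ↔ S a b) := by
  have hSR : ∀ a b : ℚ, a ≤ b → S a b → R a b := by
    intro a b hab hSab
    refine fromMeets hR hab fun c d hcd hRcd => ?_
    obtain ⟨e, f, hce, hef, hfd, hSef⟩ := h c d hcd hRcd
    obtain ⟨h1, h2⟩ := meet hS hab hef hSab hSef
    exact ⟨h1.trans hfd, hce.trans h2⟩
  intro a b hab
  constructor
  · intro hRab
    refine fromMeets hS hab fun c d hcd hScd => ?_
    exact meet hR hab hcd hRab (hSR c d hcd hScd)
  · exact hSR a b hab
end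

section
/- (Bisection Approximation) Let R : ℚ → ℚ → Prop be a rule satisfying the Existence property (there exist rationals a ≤ b with R a b) and the Separating property (for all a ≤ b with R a b and every rational c with a < c < b, either R c c or R a c and R c b have different truth values). Then for every rational ε > 0 there exist rationals a ≤ b with R a b and b - a < ε; that is, R has Yes intervals of arbitrarily small length. -/
theorem bisection_approximation (R : ℚ → ℚ → Prop)
    (hEx : ∃ a b : ℚ, a ≤ b ∧ R a b)
    (hSep : ∀ a b c : ℚ, a ≤ b → R a b → a < c → c < b →
      (R c c ∨ ¬ (R a c ↔ R c b))) :
    ∀ ε : ℚ, 0 < ε → ∃ a b : ℚ, a ≤ b ∧ R a b ∧ b - a < ε := by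
  obtain ⟨a₀, b₀, hab₀, hR₀⟩ := hEx
  have key : ∀ n : ℕ, ∃ a b : ℚ, a ≤ b ∧ R a b ∧ b - a ≤ (b₀ - a₀) / 2 ^ n := by
    intro n
    induction n with
    | zero => exact ⟨a₀, b₀, hab₀, hR₀, by simp⟩
    | succ n ih =>
      obtain ⟨a, b, hab, hR, hlen⟩ := ih
      have hnn : (0:ℚ) ≤ (b₀ - a₀) / 2 ^ (n+1) := by
        apply div_nonneg (by linarith) (by positivity)
      rcases eq_or_lt_of_le hab with heq | hlt
      · exact ⟨a, b, hab, hR, by rw [← heq]; simpa using hnn⟩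
      · set c := (a + b) / 2 with hc
        have hac : a < c := by rw [hc]; linarith
        have hcb : c < b := by rw [hc]; linarith
        have hhalf : c - a ≤ (b₀ - a₀) / 2 ^ (n+1) ∧ b - c ≤ (b₀ - a₀) / 2 ^ (n+1) := by
          constructor <;>
          · rw [hc, pow_succ, le_div_iff₀ (by positivity : (0:ℚ) < 2 ^ n * 2)]
            rw [le_div_iff₀ (by positivity : (0:ℚ) < 2 ^ n)] at hlen
            nlinarith
        rcases hSep a b c hab hR hac hcb with hcc | hne
        · exact ⟨c, c, le_refl c, hcc, by simpa using hnn⟩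
        · by_cases h1 : R a c
          · exact ⟨a, c, le_of_lt hac, h1, hhalf.1⟩
          · have h2 : R c b := by tauto
            exact ⟨c, b, le_of_lt hcb, h2, hhalf.2⟩
  intro ε hε
  obtain ⟨n, hn⟩ := pow_unbounded_of_one_lt ((b₀ - a₀) / ε) (by norm_num : (1:ℚ) < 2)
  obtain ⟨a, b, hab, hR, hlen⟩ := key n
  refine ⟨a, b, hab, hR, lt_of_le_of_lt hlen ?_⟩
  rw [div_lt_iff₀ (by positivity : (0:ℚ) < 2 ^ n)]
  rw [div_lt_iff₀ hε] at hn
  linarith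
end

section
/- Let R : ℚ → ℚ → Prop be a rule satisfying the Consistency property (for all rationals c ≤ a ≤ b ≤ d, R a b → R c d), the Existence property (there exist a ≤ b with R a b), and the Closed property (for every rational c, if for all a ≤ b, R a b → a ≤ c ∧ c ≤ b, then R c c). Then the conjunction of the Separating property (for all a ≤ b with R a b and every rational c with a < c < b, either R c c or R a c and R c b have different truth values) and the Rooted property (for all rationals c, d, if R c c and R d d then c = d) is equivalent to the conjunction of: the Two Point Separation property — for all a ≤ b with R a b and all rationals c, d with a ≤ c ≤ b, a ≤ d ≤ b, and c ≠ d, there exist rationals e, f with a ≤ e ≤ f ≤ b and R e f such that c does not lie in e:f or d does not lie in e:f — and the Disjointness property — for all a ≤ b and c ≤ d with b < c, not both R a b and R c d hold. -/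
theorem separating_rooted_iff_twoPoint_disjoint (R : ℚ → ℚ → Prop)
    (hCons : ∀ a b c d : ℚ, c ≤ a → a ≤ b → b ≤ d → R a b → R c d)
    (hEx : ∃ a b : ℚ, a ≤ b ∧ R a b)
    (hClosed : ∀ c : ℚ, (∀ a b : ℚ, a ≤ b → R a b → a ≤ c ∧ c ≤ b) → R c c) :
    ((∀ a b c : ℚ, a ≤ b → R a b → a < c → c < b → (R c c ∨ ¬ (R a c ↔ R c b))) ∧
      (∀ c d : ℚ, R c c → R d d → c = d)) ↔
    ((∀ a b c d : ℚ, a ≤ b → R a b → a ≤ c → c ≤ b → a ≤ d → d ≤ b → c ≠ d →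
        ∃ e f : ℚ, a ≤ e ∧ e ≤ f ∧ f ≤ b ∧ R e f ∧
          (¬ (e ≤ c ∧ c ≤ f) ∨ ¬ (e ≤ d ∧ d ≤ f))) ∧
      (∀ a b c d : ℚ, a ≤ b → c ≤ d → b < c → ¬ (R a b ∧ R c d))) := by
  constructor
  · rintro ⟨hSep, hRoot⟩
    constructor
    · -- TwoPoint
      intro a b c d hab hRab hac hcb had hdb hcd
      rcases lt_or_gt_of_ne hcd with h | h
      · -- c < d
        have hcm : c < (c + d) / 2 := by linarith
        have hmd : (c + d) / 2 < d := by linarith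
        have ham : a < (c + d) / 2 := lt_of_le_of_lt hac hcm
        have hmb : (c + d) / 2 < b := lt_of_lt_of_le hmd hdb
        rcases hSep a b ((c + d) / 2) hab hRab ham hmb with hmm | hniff
        · exact ⟨(c + d) / 2, b, ham.le, hmb.le, le_rfl,
            hCons _ _ _ _ le_rfl le_rfl hmb.le hmm,
            Or.inl (fun hc => absurd hc.1 (not_le.mpr hcm))⟩
        · by_cases ham' : R a ((c + d) / 2)
          · exact ⟨a, (c + d) / 2, le_rfl, ham.le, hmb.le, ham',
              Or.inr (fun hd' => absurd hd'.2 (not_le.mpr hmd))⟩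
          · have hmb' : R ((c + d) / 2) b := by
              by_contra h'
              exact hniff ⟨fun h2 => absurd h2 ham', fun h2 => absurd h2 h'⟩
            exact ⟨(c + d) / 2, b, ham.le, hmb.le, le_rfl, hmb',
              Or.inl (fun hc => absurd hc.1 (not_le.mpr hcm))⟩
      · -- d < c
        have hdm : d < (c + d) / 2 := by linarith
        have hmc : (c + d) / 2 < c := by linarith
        have ham : a < (c + d) / 2 := lt_of_le_of_lt had hdm
        have hmb : (c + d) / 2 < b := lt_of_lt_of_le hmc hcb
        rcases hSep a b ((c + d) / 2) hab hRab ham hmb with hmm | hniff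
        · exact ⟨(c + d) / 2, b, ham.le, hmb.le, le_rfl,
            hCons _ _ _ _ le_rfl le_rfl hmb.le hmm,
            Or.inr (fun hd' => absurd hd'.1 (not_le.mpr hdm))⟩
        · by_cases ham' : R a ((c + d) / 2)
          · exact ⟨a, (c + d) / 2, le_rfl, ham.le, hmb.le, ham',
              Or.inl (fun hc => absurd hc.2 (not_le.mpr hmc))⟩
          · have hmb' : R ((c + d) / 2) b := by
              by_contra h'
              exact hniff ⟨fun h2 => absurd h2 ham', fun h2 => absurd h2 h'⟩
            exact ⟨(c + d) / 2, b, ham.le, hmb.le, le_rfl, hmb',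
              Or.inr (fun hd' => absurd hd'.1 (not_le.mpr hdm))⟩
    · -- Disjoint
      rintro a b c d hab hcd hbc ⟨hR1, hR2⟩
      have hbd : b ≤ d := hbc.le.trans hcd
      have hRad : R a d := hCons a b a d le_rfl hab hbd hR1
      have had : a ≤ d := hab.trans hbd
      have key : ∀ x : ℚ, b < x → x < c → R x x := by
        intro x hbx hxc
        have h1 : a < x := lt_of_le_of_lt hab hbx
        have h2 : x < d := lt_of_lt_of_le hxc hcd
        rcases hSep a d x had hRad h1 h2 with h | h
        · exact h
        · exact absurd ⟨fun _ => hCons c d x d hxc.le hcd le_rfl hR2,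
            fun _ => hCons a b a x le_rfl hab hbx.le hR1⟩ h
      have r1 := key (b + (c - b) / 3) (by linarith) (by linarith)
      have r2 := key (b + 2 * (c - b) / 3) (by linarith) (by linarith)
      have := hRoot _ _ r1 r2
      have : c = b := by linarith
      exact absurd this (ne_of_gt hbc)
  · rintro ⟨hTP, hD⟩
    have hRoot : ∀ c d, R c c → R d d → c = d := by
      intro c d h1 h2
      by_contra hne
      rcases lt_or_gt_of_ne hne with h | h
      · exact hD c c d d le_rfl le_rfl h ⟨h1, h2⟩
      · exact hD d d c c le_rfl le_rfl h ⟨h2, h1⟩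
    refine ⟨?_, hRoot⟩
    intro a b x hab hRab hax hxb
    by_cases hxx : R x x
    · exact Or.inl hxx
    right
    intro hiff
    by_cases hRax : R a x
    · -- both R a x and R x b : x in every Yes interval, so R x x, contradiction
      have hRxb : R x b := hiff.mp hRax
      apply hxx
      apply hClosed
      intro e f hef hRef
      constructor
      · by_contra h; push_neg at h
        exact hD a x e f hax.le hef h ⟨hRax, hRef⟩
      · by_contra h; push_neg at h
        exact hD e f x b hef hxb.le h ⟨hRef, hRxb⟩
    · have hRxb : ¬ R x b := fun h => hRax (hiff.mpr h)
      by_cases hP : ∃ e f, e ≤ f ∧ R e f ∧ f < x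
      · obtain ⟨e, f, hef, hRef, hfx⟩ := hP
        have hfa : a ≤ f := by
          by_contra h; push_neg at h
          exact hD e f a b hef hab h ⟨hRef, hRab⟩
        have hea : e < a := by
          by_contra h; push_neg at h
          exact hRax (hCons e f a x h hef hfx.le hRef)
        rcases eq_or_lt_of_le hfa with heq | haf
        · -- a = f : a lies in every Yes interval
          apply hRax
          have haa : R a a := by
            apply hClosed
            intro p q hpq hRpq
            constructor
            · by_contra h; push_neg at h
              have hfp : f < p := heq ▸ h
              exact hD e f p q hef hpq hfp ⟨hRef, hRpq⟩
            · by_contra h; push_neg at h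
              exact hD p q a b hpq hab h ⟨hRpq, hRab⟩
          exact hCons a a a x le_rfl le_rfl hax.le haa
        · have hnaf : ¬ R a f := fun h => hRax (hCons a f a x le_rfl haf.le hfx.le h)
          by_cases hG : ∃ g h, g ≤ h ∧ R g h ∧ a < g
          · obtain ⟨g, h, hgh, hRgh, hag⟩ := hG
            have hgf : g ≤ f := by
              by_contra h'; push_neg at h'
              exact hD e f g h hef hgh h' ⟨hRef, hRgh⟩
            obtain ⟨e', f', h1, h2, h3, hR', hav⟩ :=
              hTP e f a g hef hRef hea.le hfa (hea.trans hag).le hgf (ne_of_lt hag)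
            have he'a : e' < a := by
              by_contra h'; push_neg at h'
              exact hnaf (hCons e' f' a f h' h2 h3 hR')
            have hgf' : g ≤ f' := by
              by_contra h'; push_neg at h'
              exact hD e' f' g h h2 hgh h' ⟨hR', hRgh⟩
            rcases hav with hav | hav
            · exact hav ⟨he'a.le, hag.le.trans hgf'⟩
            · exact hav ⟨(he'a.trans hag).le, hgf'⟩
          · push_neg at hG
            apply hRax
            have haa : R a a := by
              apply hClosed
              intro p q hpq hRpq
              constructor
              · exact hG p q hpq hRpq
              · by_contra h'; push_neg at h'
                exact hD p q a b hpq hab h' ⟨hRpq, hRab⟩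
            exact hCons a a a x le_rfl le_rfl hax.le haa
      · by_cases hQ : ∃ g h, g ≤ h ∧ R g h ∧ x < g
        · obtain ⟨g, h, hgh, hRgh, hxg⟩ := hQ
          have hgb : g ≤ b := by
            by_contra h'; push_neg at h'
            exact hD a b g h hab hgh h' ⟨hRab, hRgh⟩
          have hbh : b < h := by
            by_contra h'; push_neg at h'
            exact hRxb (hCons g h x b hxg.le hgh h' hRgh)
          rcases eq_or_lt_of_le hgb with heq | hgb'
          · -- g = b : b lies in every Yes interval
            apply hRxb
            have hbb : R b b := by
              apply hClosed
              intro p q hpq hRpq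
              constructor
              · by_contra h'; push_neg at h'
                exact hD a b p q hab hpq h' ⟨hRab, hRpq⟩
              · by_contra h'; push_neg at h'
                have hqg : q < g := heq ▸ h'
                exact hD p q g h hpq hgh hqg ⟨hRpq, hRgh⟩
            exact hCons b b x b hxb.le le_rfl le_rfl hbb
          · have hngb : ¬ R g b := fun h' => hRxb (hCons g b x b hxg.le hgb'.le le_rfl h')
            by_cases hQ2 : ∃ p q, p ≤ q ∧ R p q ∧ q < b
            · obtain ⟨p, q, hpq, hRpq, hqb⟩ := hQ2
              have hgq : g ≤ q := by
                by_contra h'; push_neg at h'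
                exact hD p q g h hpq hgh h' ⟨hRpq, hRgh⟩
              obtain ⟨g', h', h1, h2, h3, hR', hav⟩ :=
                hTP g h q b hgh hRgh hgq (hqb.le.trans hbh.le) hgb (hbh.le) (ne_of_lt hqb)
              have hbh' : b < h' := by
                by_contra h''; push_neg at h''
                exact hngb (hCons g' h' g b h1 h2 h'' hR')
              have hg'q : g' ≤ q := by
                by_contra h''; push_neg at h''
                exact hD p q g' h' hpq h2 h'' ⟨hRpq, hR'⟩
              rcases hav with hav | hav
              · exact hav ⟨hg'q, (hqb.trans hbh').le⟩
              · exact hav ⟨hg'q.trans hqb.le, hbh'.le⟩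
            · push_neg at hQ2
              apply hRxb
              have hbb : R b b := by
                apply hClosed
                intro p q hpq hRpq
                constructor
                · by_contra h'; push_neg at h'
                  exact hD a b p q hab hpq h' ⟨hRab, hRpq⟩
                · exact hQ2 p q hpq hRpq
              exact hCons b b x b hxb.le le_rfl le_rfl hbb
        · -- neither P nor Q : x lies in every Yes interval
          push_neg at hP
          push_neg at hQ
          apply hRxb
          have hxx' : R x x := by
            apply hClosed
            intro p q hpq hRpq
            exact ⟨hQ p q hpq hRpq, hP p q hpq hRpq⟩
          exact hCons x x x b le_rfl le_rfl hxb.le hxx'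
end

section
/- Let F be a fonsi. Then there exists an oracle R such that every member of F is an R-Yes interval (for all (a, b) ∈ F, R a b), and this oracle is unique: if R and S are both oracles with this property, then for all rationals a ≤ b, R a b holds if and only if S a b holds. -/
/-- A family of overlapping, notionally shrinking intervals. -/
def IsFonsi (F : Set (ℚ × ℚ)) : Prop :=
  (∀ p ∈ F, p.1 ≤ p.2) ∧
  (∀ p ∈ F, ∀ q ∈ F, max p.1 q.1 ≤ min p.2 q.2) ∧
  (∀ ε : ℚ, 0 < ε → ∃ p ∈ F, p.2 - p.1 < ε)

/-- The canonical rule determined by a fonsi. -/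
def fonsiRule (F : Set (ℚ × ℚ)) (a b : ℚ) : Prop :=
  (∀ p ∈ F, a ≤ p.2) ∧ (∀ p ∈ F, p.1 ≤ b)

lemma fonsi_gap {F : Set (ℚ × ℚ)} (hF : IsFonsi F) {u v : ℚ}
    (hu : ∀ p ∈ F, u ≤ p.2) (hv : ∀ p ∈ F, p.1 ≤ v) : u ≤ v := by
  by_contra h
  push_neg at h
  obtain ⟨p, hp, hsmall⟩ := hF.2.2 (u - v) (by linarith)
  have := hu p hp
  have := hv p hp
  linarith

lemma fonsi_mem_rule {F : Set (ℚ × ℚ)} (hF : IsFonsi F) {p : ℚ × ℚ} (hp : p ∈ F) :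
    fonsiRule F p.1 p.2 := by
  constructor
  · intro q hq
    have := hF.2.1 p hp q hq
    have h1 : p.1 ≤ max p.1 q.1 := le_max_left _ _
    have h2 : min p.2 q.2 ≤ q.2 := min_le_right _ _
    linarith
  · intro q hq
    have := hF.2.1 p hp q hq
    have h1 : q.1 ≤ max p.1 q.1 := le_max_right _ _
    have h2 : min p.2 q.2 ≤ p.2 := min_le_left _ _
    linarith

lemma fonsiRule_oracle {F : Set (ℚ × ℚ)} (hF : IsFonsi F) : IsOracle (fonsiRule F) := by
  constructor
  · rintro a b c d hca hab hbd ⟨h1, h2⟩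
    exact ⟨fun p hp => le_trans hca (h1 p hp), fun p hp => le_trans (h2 p hp) hbd⟩
  · obtain ⟨p, hp, _⟩ := hF.2.2 1 one_pos
    exact ⟨p.1, p.2, hF.1 p hp, fonsi_mem_rule hF hp⟩
  · rintro a b c hab ⟨h1, h2⟩ hac hcb
    by_cases hA : ∀ p ∈ F, c ≤ p.2
    · by_cases hB : ∀ p ∈ F, p.1 ≤ c
      · exact Or.inl ⟨hA, hB⟩
      · refine Or.inr fun hiff => hB ?_
        have : fonsiRule F c b := ⟨hA, h2⟩
        exact (hiff.mpr this).2
    · by_cases hB : ∀ p ∈ F, p.1 ≤ c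
      · refine Or.inr fun hiff => hA ?_
        have : fonsiRule F a c := ⟨h1, hB⟩
        exact (hiff.mp this).1
      · exfalso
        push_neg at hA hB
        obtain ⟨p, hp, hpc⟩ := hA
        obtain ⟨q, hq, hqc⟩ := hB
        have := hF.2.1 p hp q hq
        have h1' : q.1 ≤ max p.1 q.1 := le_max_right _ _
        have h2' : min p.2 q.2 ≤ p.2 := min_le_left _ _
        linarith
  · rintro c d ⟨h1, h2⟩ ⟨h3, h4⟩
    exact le_antisymm (fonsi_gap hF h1 h4) (fonsi_gap hF h3 h2)
  · intro c h
    constructor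
    · intro p hp
      exact ((h p.1 p.2 (hF.1 p hp) (fonsi_mem_rule hF hp))).2
    · intro p hp
      exact ((h p.1 p.2 (hF.1 p hp) (fonsi_mem_rule hF hp))).1

/-- Yes intervals of any oracle pairwise overlap. -/
lemma oracle_overlap {R : ℚ → ℚ → Prop} (hR : IsOracle R) {a b c d : ℚ}
    (hab : a ≤ b) (hcd : c ≤ d) (h1 : R a b) (h2 : R c d) :
    max a c ≤ min b d := by
  have key : ∀ a b c d : ℚ, a ≤ b → c ≤ d → R a b → R c d → b < c → False := by
    intro a b c d hab hcd h1 h2 hbc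
    set m1 := b + (c - b) / 3 with hm1
    set m2 := b + 2 * (c - b) / 3 with hm2
    have hbm1 : b < m1 := by rw [hm1]; linarith
    have hm12 : m1 < m2 := by rw [hm1, hm2]; linarith
    have hm2c : m2 < c := by rw [hm2]; linarith
    have had : R a d := hR.consistent a b a d le_rfl hab (by linarith) h1
    have hm : ∀ m : ℚ, b < m → m < c → R m m := by
      intro m hbm hmc
      rcases hR.separating a d m (by linarith) had (by linarith) (by linarith) with h | h
      · exact h
      · exfalso
        apply h
        constructor
        · intro _; exact hR.consistent c d m d (by linarith) hcd le_rfl h2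
        · intro _; exact hR.consistent a b a m le_rfl hab (by linarith) h1
    have := hR.rooted m1 m2 (hm m1 hbm1 (by linarith)) (hm m2 (by linarith) hm2c)
    linarith
  have had : a ≤ d := by
    by_contra h
    push_neg at h
    exact key c d a b hcd hab h2 h1 h
  have hcb : c ≤ b := by
    by_contra h
    push_neg at h
    exact key a b c d hab hcd h1 h2 h
  exact max_le (le_min hab had) (le_min hcb hcd)

/-- Any oracle whose Yes intervals include F is contained in the canonical rule. -/
lemma oracle_le_rule {F : Set (ℚ × ℚ)} (hF : IsFonsi F) {R : ℚ → ℚ → Prop}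
    (hR : IsOracle R) (hFR : ∀ x ∈ F, R x.1 x.2) {a b : ℚ} (hab : a ≤ b)
    (h : R a b) : fonsiRule F a b := by
  constructor
  · intro p hp
    have := oracle_overlap hR hab (hF.1 p hp) h (hFR p hp)
    have h1 : a ≤ max a p.1 := le_max_left _ _
    have h2 : min b p.2 ≤ p.2 := min_le_right _ _
    linarith
  · intro p hp
    have := oracle_overlap hR hab (hF.1 p hp) h (hFR p hp)
    have h1 : p.1 ≤ max a p.1 := le_max_right _ _
    have h2 : min b p.2 ≤ b := min_le_left _ _
    linarith

lemma oracle_point {F : Set (ℚ × ℚ)} (hF : IsFonsi F) {R : ℚ → ℚ → Prop}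
    (hR : IsOracle R) (hFR : ∀ x ∈ F, R x.1 x.2) {a : ℚ}
    (h1 : ∀ p ∈ F, a ≤ p.2) (h2 : ∀ p ∈ F, p.1 ≤ a) : R a a := by
  apply hR.closed
  intro u v huv hYes
  obtain ⟨hu, hv⟩ := oracle_le_rule hF hR hFR huv hYes
  exact ⟨fonsi_gap hF hu h2, fonsi_gap hF h1 hv⟩

lemma oracle_left_extend {F : Set (ℚ × ℚ)} (hF : IsFonsi F) {R : ℚ → ℚ → Prop}
    (hR : IsOracle R) (hFR : ∀ x ∈ F, R x.1 x.2) {c d a : ℚ}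
    (hcd : c ≤ d) (hca : c ≤ a) (had : a ≤ d) (h : R c d)
    (ha : ∀ p ∈ F, a ≤ p.2) : R a d := by
  rcases eq_or_lt_of_le hca with rfl | hca'
  · exact h
  rcases eq_or_lt_of_le had with rfl | had'
  · have h2 : ∀ p ∈ F, p.1 ≤ a := (oracle_le_rule hF hR hFR hcd h).2
    exact oracle_point hF hR hFR ha h2
  rcases hR.separating c d a hcd h hca' had' with haa | hne
  · exact hR.consistent a a a d le_rfl le_rfl had haa
  · by_cases hRad : R a d
    · exact hRad
    · have hRca : R c a := by
        by_contra hRca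
        exact hne (iff_of_false hRca hRad)
      have h2 : ∀ p ∈ F, p.1 ≤ a := (oracle_le_rule hF hR hFR (le_of_lt hca') hRca).2
      exact hR.consistent a a a d le_rfl le_rfl had (oracle_point hF hR hFR ha h2)

lemma oracle_right_extend {F : Set (ℚ × ℚ)} (hF : IsFonsi F) {R : ℚ → ℚ → Prop}
    (hR : IsOracle R) (hFR : ∀ x ∈ F, R x.1 x.2) {c d b : ℚ}
    (hcd : c ≤ d) (hcb : c ≤ b) (hbd : b ≤ d) (h : R c d)
    (hb : ∀ p ∈ F, p.1 ≤ b) : R c b := by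
  rcases eq_or_lt_of_le hbd with rfl | hbd'
  · exact h
  rcases eq_or_lt_of_le hcb with rfl | hcb'
  · have h1 : ∀ p ∈ F, c ≤ p.2 := (oracle_le_rule hF hR hFR hcd h).1
    exact oracle_point hF hR hFR h1 hb
  rcases hR.separating c d b hcd h hcb' hbd' with hbb | hne
  · exact hR.consistent b b c b hcb le_rfl le_rfl hbb
  · by_cases hRcb : R c b
    · exact hRcb
    · have hRbd : R b d := by
        by_contra hRbd
        exact hne (iff_of_false hRcb hRbd)
      have h1 : ∀ p ∈ F, b ≤ p.2 := (oracle_le_rule hF hR hFR (le_of_lt hbd') hRbd).1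
      exact hR.consistent b b c b hcb le_rfl le_rfl (oracle_point hF hR hFR h1 hb)

lemma rule_le_oracle {F : Set (ℚ × ℚ)} (hF : IsFonsi F) {R : ℚ → ℚ → Prop}
    (hR : IsOracle R) (hFR : ∀ x ∈ F, R x.1 x.2) {a b : ℚ} (hab : a ≤ b)
    (h : fonsiRule F a b) : R a b := by
  obtain ⟨c, d, hcd, hYes⟩ := hR.exists_yes
  have hbig : R (min a c) (max b d) :=
    hR.consistent c d (min a c) (max b d) (min_le_right _ _) hcd (le_max_right _ _) hYes
  have h1 : R a (max b d) :=
    oracle_left_extend hF hR hFR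
      (le_trans (min_le_left _ _) (le_trans hab (le_max_left _ _)))
      (min_le_left _ _) (le_trans hab (le_max_left _ _)) hbig h.1
  exact oracle_right_extend hF hR hFR (le_trans hab (le_max_left _ _)) hab
    (le_max_left _ _) h1 h.2

theorem fonsi_oracle_exists_unique (F : Set (ℚ × ℚ)) (hF : IsFonsi F) :
    (∃ R : ℚ → ℚ → Prop, IsOracle R ∧ ∀ x ∈ F, R x.1 x.2) ∧
    (∀ R S : ℚ → ℚ → Prop, IsOracle R → IsOracle S →
      (∀ x ∈ F, R x.1 x.2) → (∀ x ∈ F, S x.1 x.2) →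
      ∀ a b : ℚ, a ≤ b → (R a b ↔ S a b)) := by
  constructor
  · exact ⟨fonsiRule F, fonsiRule_oracle hF, fun x hx => fonsi_mem_rule hF hx⟩
  · intro R S hR hS hFR hFS a b hab
    constructor
    · intro h
      exact rule_le_oracle hF hS hFS hab (oracle_le_rule hF hR hFR hab h)
    · intro h
      exact rule_le_oracle hF hR hFR hab (oracle_le_rule hF hS hFS hab h)
end

section
/- Let R and S be oracles such that for every rational ε > 0 there exist rationals a ≤ b and c ≤ d with R a b, S c d, b - a < ε, d - c < ε, and the intervals a:b and c:d having a common rational point (max a c ≤ min b d). Then R = S, i.e. for all rationals a ≤ b, R a b holds if and only if S a b holds. -/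
/-- Two Yes intervals of an oracle cannot be separated by a gap. -/
lemma oracle_no_gap {R : ℚ → ℚ → Prop} (hR : IsOracle R) {a b c d : ℚ}
    (hab : a ≤ b) (hcd : c ≤ d) (h1 : R a b) (h2 : R c d) : ¬ b < c := by
  intro hbc
  have key : ∀ z : ℚ, b < z → z < c → R z z := by
    intro z h1z h2z
    have hRad : R a d := hR.consistent a b a d le_rfl hab (by linarith) h1
    have hRaz : R a z := hR.consistent a b a z le_rfl hab h1z.le h1
    have hRzd : R z d := hR.consistent c d z d h2z.le hcd le_rfl h2
    rcases hR.separating a d z (by linarith) hRad (by linarith) (by linarith) with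
      hz | hne
    · exact hz
    · exact absurd (iff_of_true hRaz hRzd) hne
  have hx := key (b + (c - b) / 3) (by linarith) (by linarith)
  have hy := key (b + 2 * (c - b) / 3) (by linarith) (by linarith)
  have := hR.rooted _ _ hx hy
  have : (c - b) / 3 = 2 * (c - b) / 3 := by linarith
  linarith [this]

/-- If an interval is a No interval, some Yes interval avoids it on the left,
on the right, or the oracle's point is trapped strictly inside. -/
lemma oracle_dichotomy {S : ℚ → ℚ → Prop} (hS : IsOracle S) {a b : ℚ}
    (hab : a ≤ b) (hnab : ¬ S a b) :
    (∃ u v : ℚ, u ≤ v ∧ S u v ∧ v < a) ∨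
    (∃ u v : ℚ, u ≤ v ∧ S u v ∧ b < u) ∨
    ((∃ u v : ℚ, u ≤ v ∧ S u v ∧ a < u) ∧ (∃ u v : ℚ, u ≤ v ∧ S u v ∧ v < b)) := by
  have hna : ¬ S a a := fun hs => hnab (hS.consistent a a a b le_rfl le_rfl hab hs)
  have hnb : ¬ S b b := fun hs => hnab (hS.consistent b b a b hab le_rfl le_rfl hs)
  have ha' : ¬ ∀ p q : ℚ, p ≤ q → S p q → p ≤ a ∧ a ≤ q := fun H => hna (hS.closed a H)
  have hb' : ¬ ∀ p q : ℚ, p ≤ q → S p q → p ≤ b ∧ b ≤ q := fun H => hnb (hS.closed b H)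
  push_neg at ha' hb'
  obtain ⟨p, q, hpq, hSpq, hcona⟩ := ha'
  obtain ⟨r, s, hrs, hSrs, hconb⟩ := hb'
  by_cases hap : a < p
  · -- a is left of S's point
    by_cases hbr : b < r
    · exact Or.inr (Or.inl ⟨r, s, hrs, hSrs, hbr⟩)
    · have hsb : s < b := hconb (not_lt.mp hbr)
      exact Or.inr (Or.inr ⟨⟨p, q, hpq, hSpq, hap⟩, ⟨r, s, hrs, hSrs, hsb⟩⟩)
  · have hqa : q < a := hcona (not_lt.mp hap)
    exact Or.inl ⟨p, q, hpq, hSpq, hqa⟩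

lemma oracle_forward (R S : ℚ → ℚ → Prop)
    (hR : IsOracle R) (hS : IsOracle S)
    (h : ∀ ε : ℚ, 0 < ε → ∃ a b c d : ℚ, a ≤ b ∧ c ≤ d ∧ R a b ∧ S c d ∧
      b - a < ε ∧ d - c < ε ∧ max a c ≤ min b d)
    (a b : ℚ) (hab : a ≤ b) (hRab : R a b) : S a b := by
  by_contra hnab
  rcases oracle_dichotomy hS hab hnab with ⟨u, v, huv, hSuv, hva⟩ |
    ⟨u, v, huv, hSuv, hbu⟩ | ⟨⟨u, v, huv, hSuv, hau⟩, ⟨w, x, hwx, hSwx, hxb⟩⟩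
  · -- S's point is left of a : v < a
    obtain ⟨p, q, c, d, hpq, hcd, hRpq, hScd, hq, hd, hov⟩ := h ((a - v) / 2) (by linarith)
    -- [c,d] meets [u,v] : c ≤ v
    have hcv : c ≤ v := not_lt.mp (oracle_no_gap hS huv hcd hSuv hScd)
    -- [p,q] meets [a,b] : a ≤ q
    have haq : a ≤ q := by
      have := not_lt.mp (oracle_no_gap hR hpq hab hRpq hRab)
      linarith
    -- overlap : p ≤ d
    have hpd : p ≤ min q d := le_trans (le_max_left p c) hov
    have : p ≤ d := le_trans hpd (min_le_right q d)
    linarith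
  · -- S's point is right of b : b < u
    obtain ⟨p, q, c, d, hpq, hcd, hRpq, hScd, hq, hd, hov⟩ := h ((u - b) / 2) (by linarith)
    have hud : u ≤ d := not_lt.mp (oracle_no_gap hS hcd huv hScd hSuv)
    have hpb : p ≤ b := not_lt.mp (oracle_no_gap hR hab hpq hRab hRpq)
    have hcq : c ≤ q := le_trans (le_trans (le_max_right p c) hov) (min_le_left q d)
    linarith
  · -- S's point is inside (a,b) : there are Yes intervals with a < u and x < b
    have hultx : u ≤ x := by
      have := not_lt.mp (oracle_no_gap hS hwx huv hSwx hSuv)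
      linarith [not_lt.mp (oracle_no_gap hS huv hwx hSuv hSwx)]
    obtain ⟨p, q, c, d, hpq, hcd, hRpq, hScd, hq, hd, hov⟩ :=
      h (min (u - a) (b - x)) (by
        apply lt_min <;> linarith)
    -- [c,d] meets [u,v] : u ≤ d ; and meets [w,x] : c ≤ x
    have hud : u ≤ d := not_lt.mp (oracle_no_gap hS hcd huv hScd hSuv)
    have hcx : c ≤ x := not_lt.mp (oracle_no_gap hS hwx hcd hSwx hScd)
    have h1 : d - c < u - a := lt_of_lt_of_le hd (min_le_left _ _)
    have h2 : d - c < b - x := lt_of_lt_of_le hd (min_le_right _ _)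
    have hac : a ≤ c := by linarith
    have hdb : d ≤ b := by linarith
    exact hnab (hS.consistent c d a b hac hcd hdb hScd)

theorem small_overlapping_implies_equal (R S : ℚ → ℚ → Prop)
    (hR : IsOracle R) (hS : IsOracle S)
    (h : ∀ ε : ℚ, 0 < ε → ∃ a b c d : ℚ, a ≤ b ∧ c ≤ d ∧ R a b ∧ S c d ∧
      b - a < ε ∧ d - c < ε ∧ max a c ≤ min b d) :
    ∀ a b : ℚ, a ≤ b → (R a b ↔ S a b) := by
  have h' : ∀ ε : ℚ, 0 < ε → ∃ a b c d : ℚ, a ≤ b ∧ c ≤ d ∧ S a b ∧ R c d ∧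
      b - a < ε ∧ d - c < ε ∧ max a c ≤ min b d := by
    intro ε hε
    obtain ⟨a, b, c, d, hab, hcd, h1, h2, h3, h4, h5⟩ := h ε hε
    exact ⟨c, d, a, b, hcd, hab, h2, h1, h4, h3, by rw [max_comm, min_comm]; exact h5⟩
  intro a b hab
  exact ⟨oracle_forward R S hR hS h a b hab, oracle_forward S R hS hR h' a b hab⟩
end

section
/- (Least Upper Bound) Let 𝒮 be a nonempty set of oracles and let M be an oracle such that r < M for every r ∈ 𝒮 (𝒮 is bounded above). Then there exists an oracle L such that: (i) L is an upper bound of 𝒮, i.e. for every r ∈ 𝒮, ¬ (L < r); and (ii) L is least among upper bounds, i.e. for every oracle y, if ¬ (y < r) for every r ∈ 𝒮, then ¬ (y < L). -/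
namespace OracleLUB

/-- Two Yes intervals of an oracle cannot be disjoint. -/
lemma no_disjoint {R : ℚ → ℚ → Prop} (hR : IsOracle R) {a b c d : ℚ}
    (hab : a ≤ b) (hcd : c ≤ d) (h1 : R a b) (h2 : R c d) (hbc : b < c) : False := by
  have had : R a d := hR.consistent a b a d le_rfl hab (le_trans hbc.le hcd) h1
  have key : ∀ m : ℚ, b < m → m < c → R m m := by
    intro m hbm hmc
    have ham : a < m := lt_of_le_of_lt hab hbm
    have hmd : m < d := lt_of_lt_of_le hmc hcd
    have h1' : R a m := hR.consistent a b a m le_rfl hab hbm.le h1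
    have h2' : R m d := hR.consistent c d m d hmc.le hcd le_rfl h2
    rcases hR.separating a d m (le_trans hab (le_trans hbc.le hcd)) had ham hmd with h | h
    · exact h
    · exact absurd (iff_of_true h1' h2') h
  obtain ⟨m1, hm1, hm1'⟩ := exists_between hbc
  obtain ⟨m2, hm2, hm2'⟩ := exists_between hm1'
  have := hR.rooted m1 m2 (key m1 hm1 (hm2.trans hm2')) (key m2 (hm1.trans hm2) hm2')
  exact absurd this (ne_of_lt hm2)

/-- The set of left endpoints of Yes intervals, as reals. -/
def leftSet (R : ℚ → ℚ → Prop) : Set ℝ :=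
  {x : ℝ | ∃ c d : ℚ, c ≤ d ∧ R c d ∧ x = (c : ℝ)}

/-- The real number associated to an oracle. -/
noncomputable def val (R : ℚ → ℚ → Prop) : ℝ := sSup (leftSet R)

lemma leftSet_nonempty {R : ℚ → ℚ → Prop} (hR : IsOracle R) : (leftSet R).Nonempty := by
  obtain ⟨a, b, hab, h⟩ := hR.exists_yes
  exact ⟨(a : ℝ), a, b, hab, h, rfl⟩

lemma mem_leftSet_le {R : ℚ → ℚ → Prop} (hR : IsOracle R) {a b : ℚ}
    (hab : a ≤ b) (h : R a b) : ∀ x ∈ leftSet R, x ≤ (b : ℝ) := by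
  rintro x ⟨c, d, hcd, h2, rfl⟩
  have : c ≤ b := by
    by_contra hc
    exact no_disjoint hR hab hcd h h2 (lt_of_not_ge hc)
  exact_mod_cast this

lemma leftSet_bddAbove {R : ℚ → ℚ → Prop} (hR : IsOracle R) : BddAbove (leftSet R) := by
  obtain ⟨a, b, hab, h⟩ := hR.exists_yes
  exact ⟨(b : ℝ), fun x hx => mem_leftSet_le hR hab h x hx⟩

lemma le_val {R : ℚ → ℚ → Prop} (hR : IsOracle R) {a b : ℚ}
    (hab : a ≤ b) (h : R a b) : (a : ℝ) ≤ val R :=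
  le_csSup (leftSet_bddAbove hR) ⟨a, b, hab, h, rfl⟩

lemma val_le {R : ℚ → ℚ → Prop} (hR : IsOracle R) {a b : ℚ}
    (hab : a ≤ b) (h : R a b) : val R ≤ (b : ℝ) :=
  csSup_le (leftSet_nonempty hR) (mem_leftSet_le hR hab h)

lemma exists_left {R : ℚ → ℚ → Prop} (hR : IsOracle R) {q : ℚ}
    (h : (q : ℝ) < val R) : ∃ c d : ℚ, c ≤ d ∧ R c d ∧ q < c := by
  obtain ⟨x, hx, hqx⟩ := exists_lt_of_lt_csSup (leftSet_nonempty hR) h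
  obtain ⟨c, d, hcd, h2, rfl⟩ := hx
  exact ⟨c, d, hcd, h2, by exact_mod_cast hqx⟩

lemma exists_right {R : ℚ → ℚ → Prop} (hR : IsOracle R) {q : ℚ}
    (h : val R < (q : ℝ)) : ∃ c d : ℚ, c ≤ d ∧ R c d ∧ d < q := by
  obtain ⟨m, hm1, hm2⟩ := exists_rat_btwn h
  have hm2' : m < q := by exact_mod_cast hm2
  by_cases hx : ∃ c d : ℚ, c ≤ d ∧ R c d ∧ d < m
  · obtain ⟨c, d, hcd, h2, hdm⟩ := hx
    exact ⟨c, d, hcd, h2, hdm.trans hm2'⟩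
  · push_neg at hx
    have hroot : R m m := by
      apply hR.closed
      intro a b hab h2
      constructor
      · have : (a : ℝ) < (m : ℝ) := lt_of_le_of_lt (le_val hR hab h2) hm1
        exact le_of_lt (by exact_mod_cast this)
      · exact hx a b hab h2
    exact ⟨m, m, le_rfl, hroot, hm2'⟩

/-- OracleLT corresponds to `<` on the associated reals. -/
lemma lt_iff {R S : ℚ → ℚ → Prop} (hR : IsOracle R) (hS : IsOracle S) :
    OracleLT R S ↔ val R < val S := by
  constructor
  · rintro ⟨a, b, c, d, hab, hcd, h1, h2, hbc⟩
    calc val R ≤ (b : ℝ) := val_le hR hab h1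
      _ < (c : ℝ) := by exact_mod_cast hbc
      _ ≤ val S := le_val hS hcd h2
  · intro h
    obtain ⟨q1, hq1, hq1'⟩ := exists_rat_btwn h
    obtain ⟨q2, hq2, hq2'⟩ := exists_rat_btwn hq1'
    obtain ⟨a, b, hab, h1, hb⟩ := exists_right hR hq1
    obtain ⟨c, d, hcd, h2, hc⟩ := exists_left hS hq2'
    refine ⟨a, b, c, d, hab, hcd, h1, h2, ?_⟩
    have : (q1 : ℝ) < (q2 : ℝ) := hq2
    exact hb.trans (lt_trans (by exact_mod_cast this) hc)

/-- The oracle associated to a real number. -/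
def mkO (x : ℝ) : ℚ → ℚ → Prop := fun a b => a ≤ b ∧ (a : ℝ) ≤ x ∧ x ≤ (b : ℝ)

lemma isOracle_mkO (x : ℝ) : IsOracle (mkO x) := by
  constructor
  · rintro a b c d hca hab hbd ⟨-, hax, hxb⟩
    exact ⟨le_trans hca (le_trans hab hbd),
      le_trans (by exact_mod_cast hca) hax, le_trans hxb (by exact_mod_cast hbd)⟩
  · obtain ⟨q, hq⟩ := exists_rat_lt x
    obtain ⟨p, hp⟩ := exists_rat_gt x
    have hqp : (q : ℝ) ≤ (p : ℝ) := le_of_lt (hq.trans hp)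
    exact ⟨q, p, by exact_mod_cast hqp, by exact_mod_cast hqp, hq.le, hp.le⟩
  · rintro a b c hab ⟨-, hax, hxb⟩ hac hcb
    rcases lt_trichotomy x (c : ℝ) with h | h | h
    · right
      have h1 : mkO x a c := ⟨hac.le, hax, h.le⟩
      have h2 : ¬ mkO x c b := fun ⟨_, hcx, _⟩ => absurd h (not_lt.mpr hcx)
      exact fun hiff => h2 (hiff.mp h1)
    · exact Or.inl ⟨le_rfl, h.ge, h.le⟩
    · right
      have h1 : ¬ mkO x a c := fun ⟨_, _, hxc⟩ => absurd h (not_lt.mpr hxc)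
      have h2 : mkO x c b := ⟨hcb.le, h.le, hxb⟩
      exact fun hiff => h1 (hiff.mpr h2)
  · rintro c d ⟨-, hcx, hxc⟩ ⟨-, hdx, hxd⟩
    have : (c : ℝ) = (d : ℝ) := le_antisymm (hcx.trans hxd) (hdx.trans hxc)
    exact_mod_cast this
  · intro c hc
    obtain ⟨p, hp⟩ := exists_rat_gt x
    obtain ⟨n, hn⟩ := exists_rat_lt x
    have hxc : x ≤ (c : ℝ) := by
      by_contra h
      push_neg at h
      obtain ⟨q, hq1, hq2⟩ := exists_rat_btwn h
      have hqp : (q : ℝ) ≤ (p : ℝ) := le_of_lt (hq2.trans hp)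
      have := (hc q p (by exact_mod_cast hqp) ⟨by exact_mod_cast hqp, hq2.le, hp.le⟩).1
      have : (q : ℝ) ≤ (c : ℝ) := by exact_mod_cast this
      exact absurd hq1 (not_lt.mpr this)
    have hcx : (c : ℝ) ≤ x := by
      by_contra h
      push_neg at h
      obtain ⟨q, hq1, hq2⟩ := exists_rat_btwn h
      have hnq : (n : ℝ) ≤ (q : ℝ) := le_of_lt (hn.trans hq1)
      have := (hc n q (by exact_mod_cast hnq) ⟨by exact_mod_cast hnq, hn.le, hq1.le⟩).2
      have : (c : ℝ) ≤ (q : ℝ) := by exact_mod_cast this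
      exact absurd hq2 (not_lt.mpr this)
    exact ⟨le_rfl, hcx, hxc⟩

lemma val_mkO (x : ℝ) : val (mkO x) = x := by
  apply le_antisymm
  · apply csSup_le (leftSet_nonempty (isOracle_mkO x))
    rintro y ⟨c, d, _, ⟨_, hcx, _⟩, rfl⟩
    exact hcx
  · by_contra h
    push_neg at h
    obtain ⟨q, hq1, hq2⟩ := exists_rat_btwn h
    obtain ⟨p, hp⟩ := exists_rat_gt x
    have hqp : (q : ℝ) ≤ (p : ℝ) := le_of_lt (hq2.trans hp)
    have := le_val (isOracle_mkO x) (show q ≤ p by exact_mod_cast hqp)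
      ⟨by exact_mod_cast hqp, hq2.le, hp.le⟩
    exact absurd hq1 (not_lt.mpr this)

end OracleLUB

theorem oracle_least_upper_bound (𝒮 : Set (ℚ → ℚ → Prop))
    (h𝒮 : ∀ r ∈ 𝒮, IsOracle r) (hne : 𝒮.Nonempty)
    (M : ℚ → ℚ → Prop) (hM : IsOracle M) (hbd : ∀ r ∈ 𝒮, OracleLT r M) :
    ∃ L : ℚ → ℚ → Prop, IsOracle L ∧
      (∀ r ∈ 𝒮, ¬ OracleLT L r) ∧
      (∀ y : ℚ → ℚ → Prop, IsOracle y → (∀ r ∈ 𝒮, ¬ OracleLT y r) →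
        ¬ OracleLT y L) := by
  classical
  set T : Set ℝ := OracleLUB.val '' 𝒮 with hT
  have hTne : T.Nonempty := hne.image _
  have hTbdd : BddAbove T := by
    refine ⟨OracleLUB.val M, ?_⟩
    rintro x ⟨r, hr, rfl⟩
    exact ((OracleLUB.lt_iff (h𝒮 r hr) hM).mp (hbd r hr)).le
  set x : ℝ := sSup T with hx
  refine ⟨OracleLUB.mkO x, OracleLUB.isOracle_mkO x, ?_, ?_⟩
  · intro r hr hlt
    have := (OracleLUB.lt_iff (OracleLUB.isOracle_mkO x) (h𝒮 r hr)).mp hlt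
    rw [OracleLUB.val_mkO] at this
    exact absurd (le_csSup hTbdd ⟨r, hr, rfl⟩) (not_le.mpr this)
  · intro y hy hub hlt
    have hvy := (OracleLUB.lt_iff hy (OracleLUB.isOracle_mkO x)).mp hlt
    rw [OracleLUB.val_mkO] at hvy
    have : x ≤ OracleLUB.val y := by
      apply csSup_le hTne
      rintro z ⟨r, hr, rfl⟩
      by_contra h
      push_neg at h
      exact hub r hr ((OracleLUB.lt_iff hy (h𝒮 r hr)).mpr h)
    exact absurd hvy (not_lt.mpr this)
end

section
/- (Cauchy Completeness) Let (aₙ) be a sequence of oracles that is Cauchy in the following sense: for every natural number M > 0 there exist a natural number N and rationals c ≤ d with d - c ≤ 1/M such that for all n ≥ N, aₙ c d holds (the interval c:d is an aₙ-Yes interval for all n ≥ N). Then the sequence converges to an oracle: there exists an oracle r such that for every natural number M > 0 there exist a natural number N and rationals c ≤ d with d - c ≤ 1/M, r c d, and aₙ c d for all n ≥ N. -/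
/-- If `R e e` holds, then `e` belongs to every Yes interval. -/
lemma oracle_root_mem {R : ℚ → ℚ → Prop} (h : IsOracle R) {e u v : ℚ}
    (hee : R e e) (huv : u ≤ v) (hR : R u v) : u ≤ e ∧ e ≤ v := by
  constructor
  · by_contra hlt
    push_neg at hlt
    -- e < u
    set t := (e + u) / 2 with ht
    have h1 : e < t := by rw [ht]; linarith
    have h2 : t < u := by rw [ht]; linarith
    have hRev : R e v := h.consistent u v e v hlt.le huv le_rfl hR
    rcases h.separating e v t (hlt.le.trans huv) hRev h1 (h2.trans_le huv) with htt | hniff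
    · exact absurd (h.rooted t e htt hee) h1.ne'
    · have hRet : R e t := h.consistent e e e t le_rfl le_rfl h1.le hee
      have hRtv : R t v := h.consistent u v t v h2.le huv le_rfl hR
      exact hniff (iff_of_true hRet hRtv)
  · by_contra hlt
    push_neg at hlt
    -- v < e
    set t := (v + e) / 2 with ht
    have h1 : v < t := by rw [ht]; linarith
    have h2 : t < e := by rw [ht]; linarith
    have hRue : R u e := h.consistent u v u e le_rfl huv hlt.le hR
    rcases h.separating u e t (huv.trans hlt.le) hRue (huv.trans_lt h1) h2 with htt | hniff
    · exact absurd (h.rooted t e htt hee) h2.ne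
    · have hRut : R u t := h.consistent u v u t le_rfl huv h1.le hR
      have hRte : R t e := h.consistent e e t e h2.le le_rfl le_rfl hee
      exact hniff (iff_of_true hRut hRte)

/-- Any two Yes intervals of an oracle intersect. -/
lemma oracle_yes_intersect {R : ℚ → ℚ → Prop} (h : IsOracle R) {u v p q : ℚ}
    (huv : u ≤ v) (hpq : p ≤ q) (hR1 : R u v) (hR2 : R p q) : p ≤ v := by
  by_contra hlt
  push_neg at hlt
  -- v < p
  set t := (v + p) / 2 with ht
  have h1 : v < t := by rw [ht]; linarith
  have h2 : t < p := by rw [ht]; linarith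
  have hvq : v ≤ q := (hlt.le).trans hpq
  have hRuq : R u q := h.consistent u v u q le_rfl huv hvq hR1
  rcases h.separating u q t (huv.trans hvq) hRuq (huv.trans_lt h1) (h2.trans_le hpq)
      with htt | hniff
  · have := (oracle_root_mem h htt huv hR1).2
    exact absurd this (not_le.mpr h1)
  · have hRut : R u t := h.consistent u v u t le_rfl huv h1.le hR1
    have hRtq : R t q := h.consistent p q t q h2.le hpq le_rfl hR2
    exact hniff (iff_of_true hRut hRtq)

theorem oracle_cauchy_complete (a : ℕ → (ℚ → ℚ → Prop))
    (ha : ∀ n, IsOracle (a n))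
    (hCauchy : ∀ M : ℕ, 0 < M → ∃ N : ℕ, ∃ c d : ℚ, c ≤ d ∧
      d - c ≤ 1 / (M : ℚ) ∧ ∀ n ≥ N, a n c d) :
    ∃ r : ℚ → ℚ → Prop, IsOracle r ∧
      ∀ M : ℕ, 0 < M → ∃ N : ℕ, ∃ c d : ℚ, c ≤ d ∧
        d - c ≤ 1 / (M : ℚ) ∧ r c d ∧ ∀ n ≥ N, a n c d := by
  classical
  have H : ∀ k : ℕ, ∃ N : ℕ, ∃ c d : ℚ, c ≤ d ∧
      d - c ≤ 1 / ((k + 1 : ℕ) : ℚ) ∧ ∀ n ≥ N, a n c d :=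
    fun k => hCauchy (k + 1) k.succ_pos
  choose N c d hle hlen hyes using H
  -- the chosen intervals pairwise intersect
  have key : ∀ j k : ℕ, c j ≤ d k := by
    intro j k
    exact oracle_yes_intersect (ha (max (N j) (N k))) (hle k) (hle j)
      (hyes k _ (le_max_right _ _)) (hyes j _ (le_max_left _ _))
  set S : Set ℝ := Set.range fun k : ℕ => ((c k : ℚ) : ℝ) with hS
  have hSne : S.Nonempty := ⟨_, ⟨0, rfl⟩⟩
  have hbdd : BddAbove S := by
    refine ⟨((d 0 : ℚ) : ℝ), ?_⟩
    rintro _ ⟨k, rfl⟩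
    show ((c k : ℚ) : ℝ) ≤ ((d 0 : ℚ) : ℝ)
    exact_mod_cast key k 0
  set x : ℝ := sSup S with hx
  have hcx : ∀ k : ℕ, ((c k : ℚ) : ℝ) ≤ x := fun k => le_csSup hbdd ⟨k, rfl⟩
  -- any eventually-Yes interval contains x
  have hmem : ∀ u v : ℚ, u ≤ v → (∃ M, ∀ n ≥ M, a n u v) →
      ((u : ℚ) : ℝ) ≤ x ∧ x ≤ ((v : ℚ) : ℝ) := by
    rintro u v huv ⟨M, hM⟩
    have h1 : ∀ k : ℕ, c k ≤ v := by
      intro k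
      exact oracle_yes_intersect (ha (max M (N k))) huv (hle k)
        (hM _ (le_max_left _ _)) (hyes k _ (le_max_right _ _))
    have h2 : ∀ k : ℕ, u ≤ d k := by
      intro k
      exact oracle_yes_intersect (ha (max M (N k))) (hle k) huv
        (hyes k _ (le_max_right _ _)) (hM _ (le_max_left _ _))
    constructor
    · refine le_of_forall_pos_le_add ?_
      intro ε hε
      obtain ⟨k, hk⟩ := exists_nat_gt (1 / ε)
      have hk1 : 1 / ε < (k : ℝ) + 1 := by linarith
      have hεk : 1 < ε * ((k : ℝ) + 1) := by
        have := (div_lt_iff₀ hε).mp hk1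
        nlinarith
      have h3 : 1 / ((k : ℝ) + 1) < ε := by
        rw [div_lt_iff₀ (by positivity)]
        nlinarith
      have hud : ((u : ℚ) : ℝ) ≤ ((d k : ℚ) : ℝ) := by exact_mod_cast h2 k
      have hlen' : ((d k : ℚ) : ℝ) - ((c k : ℚ) : ℝ) ≤ 1 / ((k : ℝ) + 1) := by
        have h := hlen k
        have h2 : ((d k - c k : ℚ) : ℝ) ≤ ((1 / ((k + 1 : ℕ) : ℚ) : ℚ) : ℝ) := by
          exact_mod_cast h
        push_cast at h2
        linarith
      have := hcx k
      linarith
    · refine csSup_le hSne ?_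
      rintro _ ⟨k, rfl⟩
      show ((c k : ℚ) : ℝ) ≤ ((v : ℚ) : ℝ)
      exact_mod_cast h1 k
  refine ⟨fun u v => ((u : ℚ) : ℝ) ≤ x ∧ x ≤ ((v : ℚ) : ℝ), ?_, ?_⟩
  · constructor
    · rintro p q p' q' h1 h2 h3 ⟨hp, hq⟩
      constructor
      · exact le_trans (by exact_mod_cast h1) hp
      · exact le_trans hq (by exact_mod_cast h3)
    · obtain ⟨p, hp⟩ := exists_rat_lt x
      obtain ⟨q, hq⟩ := exists_rat_gt x
      have : (p : ℝ) ≤ (q : ℝ) := hp.le.trans hq.le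
      exact ⟨p, q, by exact_mod_cast this, hp.le, hq.le⟩
    · rintro u v t huv ⟨hu, hv⟩ hut htv
      by_cases hxt : x = ((t : ℚ) : ℝ)
      · exact Or.inl ⟨hxt.ge, hxt.le⟩
      · right
        intro hiff
        rcases lt_or_gt_of_ne hxt with hlt | hgt
        · have h1 : ((u : ℚ) : ℝ) ≤ x ∧ x ≤ ((t : ℚ) : ℝ) := ⟨hu, hlt.le⟩
          have h2 := hiff.mp h1
          exact absurd h2.1 (not_le.mpr hlt)
        · have h1 : ((t : ℚ) : ℝ) ≤ x ∧ x ≤ ((v : ℚ) : ℝ) := ⟨hgt.le, hv⟩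
          have h2 := hiff.mpr h1
          exact absurd h2.2 (not_le.mpr hgt)
    · rintro p q ⟨hp1, hp2⟩ ⟨hq1, hq2⟩
      have : ((p : ℚ) : ℝ) = ((q : ℚ) : ℝ) := le_antisymm
        (hp1.trans hq2) (hq1.trans hp2)
      exact_mod_cast this
    · intro t htall
      constructor
      · by_contra hlt
        push_neg at hlt
        -- x < t
        obtain ⟨s, hs1, hs2⟩ := exists_rat_btwn hlt
        obtain ⟨p, hp⟩ := exists_rat_lt x
        have hps : (p : ℚ) ≤ s := by exact_mod_cast (hp.le.trans hs1.le)
        have := (htall p s hps ⟨hp.le, hs1.le⟩).2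
        have hst : (t : ℚ) ≤ s := this
        have hst' : (s : ℚ) < t := by exact_mod_cast hs2
        exact absurd hst (not_le.mpr hst')
      · by_contra hlt
        push_neg at hlt
        -- x < t means second part fails: x < t? here x ≤ ↑t fails: ↑t < x
        obtain ⟨s, hs1, hs2⟩ := exists_rat_btwn hlt
        obtain ⟨q, hq⟩ := exists_rat_gt x
        have hsq : (s : ℚ) ≤ q := by exact_mod_cast (hs2.le.trans hq.le)
        have := (htall s q hsq ⟨hs2.le, hq.le⟩).1
        have hts : (t : ℚ) < s := by exact_mod_cast hs1
        exact absurd this (not_le.mpr hts)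
  · intro M hM
    obtain ⟨N', u, v, huv, hlen', hM'⟩ := hCauchy M hM
    exact ⟨N', u, v, huv, hlen', hmem u v huv ⟨N', hM'⟩, hM'⟩
end
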